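/- arXiv:2107.07202 — 7 statements merged into one kernel-verified Lean document; each statement's English description precedes it below -/
import Mathlib

section
/- Suppose V_{χ^t} ⊗ V_i ≅ V_i as kG-modules for some i ∈ I and some nonzero integer t (equivalently, σ^t(i) = i with t ≠ 0). Then χ has finite order in the character group of G. -/
open scoped TensorProduct

namespace HopfOrePaper

/-- A representation of `G` on `V` is simple (irreducible): `V ≠ 0` and the only
`G`-stable subspaces are `0` and `V`. -/
def IsSimpleRep {k G V : Type} [Field k] [Group G] [AddCommGroup V] [Module k V]
    (ρ : Representation k G V) : Prop :=
  Nontrivial V ∧ ∀ p : Submodule k V, (∀ g : G, ∀ v ∈ p, ρ g v ∈ p) → p = ⊥ ∨ p = ⊤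

/-- Isomorphism of representations. -/
def RepIso {k G V V' : Type} [Field k] [Group G] [AddCommGroup V] [Module k V]
    [AddCommGroup V'] [Module k V'] (ρ : Representation k G V)
    (ρ' : Representation k G V') : Prop :=
  ∃ f : V ≃ₗ[k] V', ∀ (g : G) (v : V), f (ρ g v) = ρ' g (f v)

/-- `IsTwistIso χ t ρ ρ'` says that `ρ' ≅ V_{χ^t} ⊗ ρ` as representations of `G`. -/
def IsTwistIso {k G V V' : Type} [Field k] [Group G] [AddCommGroup V] [Module k V]
    [AddCommGroup V'] [Module k V'] (χ : G →* kˣ) (t : ℤ)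
    (ρ : Representation k G V) (ρ' : Representation k G V') : Prop :=
  ∃ f : V ≃ₗ[k] V', ∀ (g : G) (v : V), ρ' g (f v) = ((χ g ^ t : kˣ) : k) • f (ρ g v)

/-- `ρ` and `ρ'` lie in the same class of the equivalence `∼` on simple modules,
i.e. `ρ' ≅ V_{χ^t} ⊗ ρ` for some `t ∈ ℤ` (i.e. `[i] = [j]`). -/
def TwistEquiv {k G V V' : Type} [Field k] [Group G] [AddCommGroup V] [Module k V]
    [AddCommGroup V'] [Module k V'] (χ : G →* kˣ)
    (ρ : Representation k G V) (ρ' : Representation k G V') : Prop :=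
  ∃ t : ℤ, IsTwistIso χ t ρ ρ'

/-- A presentation of the Hopf–Ore extension `H = kG(χ⁻¹, a, 0)`:
`H` is a `k`-algebra containing the group algebra `kG` and an element `x` with
`x·g = χ⁻¹(g)·g·x`, and with `k`-basis `{g xⁱ | g ∈ G, i ∈ ℕ}`. -/
structure HopfOre (k G H : Type) [Field k] [Group G] [Ring H] [Algebra k H]
    (χ : G →* kˣ) : Type where
  emb : MonoidAlgebra k G →ₐ[k] H
  x : H
  comm_rel : ∀ g : G, x * emb (MonoidAlgebra.of k G g)
      = (((χ g)⁻¹ : kˣ) : k) • (emb (MonoidAlgebra.of k G g) * x)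
  basis_li : LinearIndependent k fun p : G × ℕ => emb (MonoidAlgebra.of k G p.1) * x ^ p.2
  basis_span :
    Submodule.span k (Set.range fun p : G × ℕ => emb (MonoidAlgebra.of k G p.1) * x ^ p.2) = ⊤

variable {k G H : Type} [Field k] [Group G] [Ring H] [Algebra k H] {χ : G →* kˣ}

/-- `IsStdQuot HO ρ e c d` says that the `H`-module `W` is (a copy of) the quotient module
`M(V)/cM(V)` of `M(V) = H ⊗_{kG} V`, where `c` is a (central) polynomial in `x` of degree `d`
(of the form `x^t` or `(x^s - β)^r`): `e` is a `kG`-equivariant embedding of `V` into `W`,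
`c` annihilates `W`, and `W = ⊕_{j=0}^{d-1} xʲ·e(V)`. -/
structure IsStdQuot (HO : HopfOre k G H χ) {V W : Type}
    [AddCommGroup V] [Module k V]
    [AddCommGroup W] [Module k W] [Module H W] [IsScalarTower k H W]
    (ρ : Representation k G V) (e : V →ₗ[k] W) (c : H) (d : ℕ) : Prop where
  equivariant : ∀ (g : G) (v : V), e (ρ g v) = HO.emb (MonoidAlgebra.of k G g) • e v
  ann : ∀ w : W, c • w = 0
  xbasis : Function.Bijective fun f : Fin d → V => ∑ j : Fin d, HO.x ^ (j : ℕ) • e (f j)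

/-- A witness exhibiting the `H`-module `W` as a standard quotient module
`M(V_i)/cM(V_i)` for some finite-dimensional simple `kG`-module `V_i`. -/
structure StdWitness (HO : HopfOre k G H χ) (W : Type)
    [AddCommGroup W] [Module k W] [Module H W] [IsScalarTower k H W]
    (c : H) (d : ℕ) : Type 1 where
  V : Type
  [acg : AddCommGroup V]
  [modk : Module k V]
  ρ : Representation k G V
  fin : FiniteDimensional k V
  simple : IsSimpleRep ρ
  e : V →ₗ[k] W
  std : IsStdQuot HO ρ e c d

/-- The representation of `G` obtained from an `H`-module by restriction along
`kG → H`. -/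
noncomputable def resRep (HO : HopfOre k G H χ) (M : Type) [AddCommGroup M] [Module k M]
    [Module H M] [IsScalarTower k H M] : Representation k G M where
  toFun g :=
    { toFun := fun m => HO.emb (MonoidAlgebra.of k G g) • m
      map_add' := fun m n => smul_add _ m n
      map_smul' := fun c m => by
        simp only [RingHom.id_apply]
        exact (smul_comm c (HO.emb (MonoidAlgebra.of k G g)) m).symm }
  map_one' := by
    ext m
    simp only [LinearMap.coe_mk, AddHom.coe_mk, LinearMap.id_coe, id_eq, Module.End.one_apply]
    rw [map_one, map_one, one_smul]
  map_mul' g h := by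
    ext m
    simp only [LinearMap.coe_mk, AddHom.coe_mk, Module.End.mul_apply]
    rw [map_mul, map_mul, mul_smul]

/-- A module over a ring is indecomposable. -/
def IsIndecomposableMod (R M : Type) [Ring R] [AddCommGroup M] [Module R M] : Prop :=
  Nontrivial M ∧ ∀ p q : Submodule R M, IsCompl p q → p = ⊥ ∨ q = ⊥

/-- A module is uniserial if its submodules form a chain. -/
def IsUniserial (R M : Type) [Ring R] [AddCommGroup M] [Module R M] : Prop :=
  ∀ p q : Submodule R M, p ≤ q ∨ q ≤ p

/-- The radical of a module: the intersection of its maximal submodules. -/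
def modRadical (R M : Type) [Ring R] [AddCommGroup M] [Module R M] : Submodule R M :=
  sInf {p : Submodule R M | IsCoatom p}

/-- The socle of a module: the sum of its simple submodules. -/
def modSocle (R M : Type) [Ring R] [AddCommGroup M] [Module R M] : Submodule R M :=
  sSup {p : Submodule R M | IsAtom p}

/-- The radical series `M ⊇ rad M ⊇ rad² M ⊇ ⋯` of a module. -/
noncomputable def radIter (R M : Type) [Ring R] [AddCommGroup M] [Module R M] :
    ℕ → Submodule R M
  | 0 => ⊤
  | j + 1 => Submodule.map (radIter R M j).subtype (modRadical R (radIter R M j))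

/-- The submodule `c•M` of a module `M` (for `c` a central, or normalizing, element). -/
def smulRange {M : Type} (R : Type) [Ring R] [AddCommGroup M] [Module R M] (c : R) :
    Submodule R M :=
  Submodule.span R (Set.range fun m : M => c • m)

/-- The subquotient `q/p` associated with submodules `p ≤ q`. -/
abbrev sectionQuot {R M : Type} [Ring R] [AddCommGroup M] [Module R M]
    (p q : Submodule R M) :=
  ↥q ⧸ (Submodule.comap q.subtype p)

/-- The hypothesis that a given `H`-module structure on `M ⊗[k] N` is the one obtained
from the `H`-module structures of `M` and `N` via the comultiplication of
`H = kG(χ⁻¹,a,0)`, i.e. `Δ(g) = g ⊗ g` and `Δ(x) = x ⊗ a + 1 ⊗ x`. -/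
structure TensorAct (HO : HopfOre k G H χ) (a : G) (M N : Type)
    [AddCommGroup M] [Module k M] [Module H M] [IsScalarTower k H M]
    [AddCommGroup N] [Module k N] [Module H N] [IsScalarTower k H N]
    [Module H (M ⊗[k] N)] [IsScalarTower k H (M ⊗[k] N)] : Prop where
  g_tmul : ∀ (g : G) (m : M) (n : N),
    HO.emb (MonoidAlgebra.of k G g) • (m ⊗ₜ[k] n)
      = (HO.emb (MonoidAlgebra.of k G g) • m) ⊗ₜ[k] (HO.emb (MonoidAlgebra.of k G g) • n)
  x_tmul : ∀ (m : M) (n : N),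
    HO.x • (m ⊗ₜ[k] n)
      = (HO.x • m) ⊗ₜ[k] (HO.emb (MonoidAlgebra.of k G a) • n) + m ⊗ₜ[k] (HO.x • n)

/-- The twist of a representation by the `t`-th power of a character: this is the
representation `V_{χ^t} ⊗ ρ`, realized on the same space (`σ^t` applied to `ρ`). -/
def twistRep {k G V : Type} [Field k] [Group G] [AddCommGroup V] [Module k V]
    (χ : G →* kˣ) (t : ℤ) (ρ : Representation k G V) : Representation k G V where
  toFun g := ((χ g ^ t : kˣ) : k) • ρ g
  map_one' := by simp
  map_mul' g h := by
    ext v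
    simp only [map_mul, mul_zpow, Units.val_mul, LinearMap.smul_apply, Module.End.mul_apply,
      map_smul, smul_smul, mul_comm]

/-- The one-dimensional representation attached to a linear character. -/
def charRep (k : Type) {G : Type} [Field k] [Group G] (μ : G →* kˣ) :
    Representation k G k where
  toFun g := ((μ g : k) • LinearMap.id)
  map_one' := by
    simp only [map_one, Units.val_one, one_smul]
    rfl
  map_mul' g h := by
    ext
    simp [mul_smul, mul_comm]

/-- `SubRepIso ρT p ρ` : `p` is a `G`-stable subspace of the representation `ρT`
and, as a representation of `G`, it is isomorphic to `ρ`. -/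
def SubRepIso {k G X V : Type} [Field k] [Group G] [AddCommGroup X] [Module k X]
    [AddCommGroup V] [Module k V]
    (ρT : Representation k G X) (p : Submodule k X) (ρ : Representation k G V) : Prop :=
  (∀ g : G, ∀ y ∈ p, ρT g y ∈ p) ∧
  ∃ f : V ≃ₗ[k] ↥p, ∀ (g : G) (v : V), (f (ρ g v) : X) = ρT g (f v)



/-- **Lemma 3.1.** If `V_{χ^t} ⊗ V_i ≅ V_i` as `kG`-modules for some simple
finite-dimensional `kG`-module `V_i` and some nonzero integer `t` (i.e. `σ^t(i) = i`),
then `χ` has finite order in the character group of `G`. -/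
theorem stmt_0 {k G V : Type} [Field k] [IsAlgClosed k] [Group G]
    [AddCommGroup V] [Module k V] [FiniteDimensional k V]
    (χ : G →* kˣ) (a : G) (ha : a ∈ Subgroup.center G) (hχa : χ a ≠ 1)
    (ρ : Representation k G V) (hρ : IsSimpleRep ρ)
    (t : ℤ) (ht : t ≠ 0) (hiso : IsTwistIso χ t ρ ρ) :
    IsOfFinOrder χ := by
  obtain ⟨f, hf⟩ := hiso
  have hnt : Nontrivial V := hρ.1
  set n := Module.finrank k V with hn
  have hnpos : 0 < n := Module.finrank_pos
  -- key: for each g, (χ g)^(t*n) = 1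
  have key : ∀ g : G, χ g ^ (t * n) = 1 := by
    intro g
    have hcomp : (ρ g).comp f.toLinearMap
        = ((χ g ^ t : kˣ) : k) • (f.toLinearMap.comp (ρ g)) := by
      ext v; exact hf g v
    have hdet := congrArg LinearMap.det hcomp
    rw [LinearMap.det_comp, LinearMap.det_smul, LinearMap.det_comp] at hdet
    have hfdet : LinearMap.det f.toLinearMap ≠ 0 := by
      have := f.isUnit_det'
      exact this.ne_zero
    have hρdet : LinearMap.det (ρ g : V →ₗ[k] V) ≠ 0 := by
      have h1 : (ρ g) * (ρ g⁻¹) = 1 := by rw [← map_mul, mul_inv_cancel, map_one]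
      have : LinearMap.det (ρ g : V →ₗ[k] V) * LinearMap.det (ρ g⁻¹ : V →ₗ[k] V) = 1 := by
        rw [← LinearMap.det_comp]
        have : (ρ g).comp (ρ g⁻¹) = LinearMap.id := by
          rw [← Module.End.mul_eq_comp, h1]; rfl
        rw [this, LinearMap.det_id]
      exact left_ne_zero_of_mul_eq_one this
    have hc : (((χ g ^ t : kˣ) : k)) ^ n = 1 := by
      have hne : LinearMap.det f.toLinearMap * LinearMap.det (ρ g : V →ₗ[k] V) ≠ 0 :=
        mul_ne_zero hfdet hρdet
      apply mul_right_cancel₀ hne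
      rw [one_mul, hn, ← hdet]; ring
    have : ((χ g ^ (t * n) : kˣ) : k) = 1 := by
      push_cast [zpow_mul] at hc ⊢
      exact_mod_cast hc
    exact Units.ext this
  have hm : t * n ≠ 0 := by
    simp [ht, hnpos.ne']
  refine (isOfFinOrder_iff_pow_eq_one).mpr ⟨(t * n).natAbs, Int.natAbs_pos.mpr hm, ?_⟩
  ext g
  have h1 := key g
  have : χ g ^ ((t * n).natAbs : ℤ) = 1 := by
    rcases Int.natAbs_eq (t * n) with h | h
    · rw [← h]; exact h1
    · rw [← neg_neg ((t * n).natAbs : ℤ), ← h, zpow_neg, h1, inv_one]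
  simp only [MonoidHom.pow_apply, MonoidHom.one_apply]
  exact_mod_cast this

end HopfOrePaper
end

section
/- Let i ∈ I and l, r ∈ ℤ. Then σ^l(i) ≠ σ^r(i) in either of the following cases: (1) |χ| = ∞ and l ≠ r; (2) |q| = s < ∞ and s does not divide l − r, where q = χ(a) and |q| is the multiplicative order of q. -/
open scoped TensorProduct

namespace HopfOrePaper

variable {k G H : Type} [Field k] [Group G] [Ring H] [Algebra k H] {χ : G →* kˣ}

/-- **Lemma 3.2.** Let `V_i` be a simple finite-dimensional `kG`-module and `l, r ∈ ℤ`.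
Then `σ^l(i) ≠ σ^r(i)` (that is, `V_i` is not isomorphic to its twist by `χ^(l-r)`)
if `|χ| = ∞` and `l ≠ r`, or if `|q| = s < ∞` and `s ∤ l - r`, where `q = χ(a)`. -/
theorem stmt_1 {k G V : Type} [Field k] [IsAlgClosed k] [Group G]
    [AddCommGroup V] [Module k V] [FiniteDimensional k V]
    (χ : G →* kˣ) (a : G) (ha : a ∈ Subgroup.center G) (hχa : χ a ≠ 1)
    (ρ : Representation k G V) (hρ : IsSimpleRep ρ) (l r : ℤ)
    (h : (¬ IsOfFinOrder χ ∧ l ≠ r) ∨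
      (IsOfFinOrder (χ a) ∧ ¬ ((orderOf (χ a) : ℤ) ∣ l - r))) :
    ¬ IsTwistIso χ (l - r) ρ ρ := by
  rintro ⟨f, hf⟩
  set t : ℤ := l - r with ht
  obtain ⟨hnt, hsimp⟩ := hρ
  haveI : Nontrivial V := hnt
  rcases h with ⟨hinf, hlr⟩ | ⟨hfin, hdvd⟩
  · -- determinant argument
    have hn : 0 < Module.finrank k V := Module.finrank_pos
    set n : ℕ := Module.finrank k V with hnn
    have key : ∀ g : G, (χ g) ^ (t * n) = 1 := by
      intro g
      have hconj : ρ g = ((χ g ^ t : kˣ) : k) •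
          ((f : V →ₗ[k] V) ∘ₗ ρ g ∘ₗ (f.symm : V →ₗ[k] V)) := by
        ext v
        have h1 := hf g (f.symm v)
        rw [f.apply_symm_apply] at h1
        simpa using h1
      have hdet := congrArg LinearMap.det hconj
      rw [LinearMap.det_smul] at hdet
      have hcj : LinearMap.det ((f : V →ₗ[k] V) ∘ₗ ρ g ∘ₗ (f.symm : V →ₗ[k] V))
          = LinearMap.det (ρ g) := LinearMap.det_conj (ρ g) f
      rw [hcj] at hdet
      have hdet0 : LinearMap.det (ρ g) ≠ 0 := by
        have hu : LinearMap.det (ρ g) * LinearMap.det (ρ g⁻¹) = 1 := by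
          rw [← map_mul LinearMap.det, ← map_mul ρ, mul_inv_cancel, map_one, map_one]
        intro h0
        rw [h0, zero_mul] at hu
        exact zero_ne_one hu
      have hc : ((χ g ^ t : kˣ) : k) ^ n = 1 := by
        have := hdet
        nth_rewrite 1 [show LinearMap.det (ρ g) = 1 * LinearMap.det (ρ g) from (one_mul _).symm] at this
        exact (mul_right_cancel₀ hdet0 this).symm
      have hc' : (χ g ^ t : kˣ) ^ n = 1 := by
        rw [← Units.val_eq_one]
        push_cast
        push_cast at hc
        exact hc
      rw [← zpow_natCast (χ g ^ t) n, ← zpow_mul] at hc'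
      exact hc'
    have hpow : χ ^ (t * n) = 1 := by
      ext g
      simpa using congrArg Units.val (key g)
    have htn : (t * (n : ℤ)) ≠ 0 := by
      apply mul_ne_zero (sub_ne_zero.mpr hlr)
      exact_mod_cast hn.ne'
    have : (orderOf χ : ℤ) ∣ t * n := orderOf_dvd_iff_zpow_eq_one.mpr hpow
    have ho : orderOf χ ≠ 0 := by
      intro h0
      rw [h0] at this
      exact htn (by exact_mod_cast zero_dvd_iff.mp (by exact_mod_cast this))
    exact ho (orderOf_eq_zero_iff.mpr hinf)
  · -- Schur argument at the central element a
    obtain ⟨lam, hlam⟩ := Module.End.exists_eigenvalue (ρ a : Module.End k V)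
    -- the eigenspace is G-stable
    have hcomm : ∀ g : G, ∀ v : V, ρ a (ρ g v) = ρ g (ρ a v) := by
      intro g v
      have h1 : ρ (a * g) v = ρ (g * a) v := by rw [Subgroup.mem_center_iff.mp ha g]
      simpa [map_mul, Module.End.mul_apply] using h1
    have hstable : ∀ g : G, ∀ v ∈ Module.End.eigenspace (ρ a : Module.End k V) lam,
        ρ g v ∈ Module.End.eigenspace (ρ a : Module.End k V) lam := by
      intro g v hv
      rw [Module.End.mem_eigenspace_iff] at hv ⊢
      rw [hcomm g v, hv, map_smul]
    have heig : Module.End.eigenspace (ρ a : Module.End k V) lam = ⊤ := by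
      rcases hsimp _ hstable with hbot | htop
      · exact absurd hbot hlam
      · exact htop
    have hall : ∀ v : V, ρ a v = lam • v := by
      intro v
      have : v ∈ Module.End.eigenspace (ρ a : Module.End k V) lam := heig ▸ Submodule.mem_top
      exact Module.End.mem_eigenspace_iff.mp this
    obtain ⟨v, hv⟩ := exists_ne (0 : V)
    have hlam0 : lam ≠ 0 := by
      intro h0
      have h1 := hall v
      rw [h0, zero_smul] at h1
      have h2 : ρ a⁻¹ (ρ a v) = v := by
        have h3 : ρ a⁻¹ * ρ a = 1 := by rw [← map_mul, inv_mul_cancel, map_one]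
        calc ρ a⁻¹ (ρ a v) = (ρ a⁻¹ * ρ a) v := rfl
          _ = v := by rw [h3]; rfl
      rw [h1, map_zero] at h2
      exact hv h2.symm
    have hfv : f v ≠ 0 := fun h0 => hv (by simpa using congrArg f.symm h0)
    have h1 := hf a v
    rw [hall (f v), hall v, map_smul, smul_smul] at h1
    have h2 : lam = ((χ a ^ t : kˣ) : k) * lam := by
      by_contra hne
      exact hfv (by
        have := sub_eq_zero.mpr h1
        rw [← sub_smul] at this
        exact (smul_eq_zero.mp this).resolve_left (sub_ne_zero.mpr hne))
    have h3 : ((χ a ^ t : kˣ) : k) = 1 := by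
      nth_rewrite 1 [← one_mul lam] at h2
      exact (mul_right_cancel₀ hlam0 h2).symm
    have h4 : (χ a) ^ t = 1 := Units.ext (by simpa using h3)
    exact hdvd (orderOf_dvd_iff_zpow_eq_one.mpr h4)

end HopfOrePaper
end

section
/- If there exists a nonzero finite dimensional x-torsionfree H-module, then χ has finite order in the character group of G. -/
open scoped TensorProduct

namespace HopfOrePaper

variable {k G H : Type} [Field k] [Group G] [Ring H] [Algebra k H] {χ : G →* kˣ}

/-- **Lemma 3.3.** If there exists a nonzero finite-dimensional `x`-torsionfree module
over `H = kG(χ⁻¹, a, 0)`, then `χ` has finite order in the character group of `G`. -/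
theorem stmt_2 {k G H : Type} [Field k] [IsAlgClosed k] [Group G] [Ring H] [Algebra k H]
    {χ : G →* kˣ} (a : G) (ha : a ∈ Subgroup.center G) (hχa : χ a ≠ 1)
    (HO : HopfOre k G H χ)
    (M : Type) [AddCommGroup M] [Module k M] [Module H M] [IsScalarTower k H M]
    [FiniteDimensional k M] [Nontrivial M]
    (htf : ∀ m : M, HO.x • m = 0 → m = 0) :
    IsOfFinOrder χ := by
  classical
  set n := Module.finrank k M with hn
  have hnpos : 0 < n := Module.finrank_pos
  -- the linear operator given by the action of x
  let X : M →ₗ[k] M :=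
    { toFun := fun m => HO.x • m
      map_add' := fun m n => smul_add _ _ _
      map_smul' := fun c m => (smul_comm c HO.x m).symm }
  have hXinj : Function.Injective X := by
    rw [← LinearMap.ker_eq_bot]
    ext m
    constructor
    · intro hm
      exact htf m hm
    · intro hm
      simp only [Submodule.mem_bot] at hm
      subst hm
      simp [LinearMap.mem_ker, X]
  have hXbij : Function.Bijective X :=
    ⟨hXinj, (LinearMap.injective_iff_surjective).mp hXinj⟩
  have hdetX : LinearMap.det X ≠ 0 := by
    have := LinearEquiv.isUnit_det' (LinearEquiv.ofBijective X hXbij)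
    have h2 : ((LinearEquiv.ofBijective X hXbij : M ≃ₗ[k] M) : M →ₗ[k] M) = X := rfl
    rw [h2] at this
    exact this.ne_zero
  set ρ := resRep HO M with hρ
  have key : ∀ g : G, ((χ g : kˣ) : k) ^ n = 1 := by
    intro g
    have hrel : X ∘ₗ (ρ g) = (((χ g)⁻¹ : kˣ) : k) • ((ρ g) ∘ₗ X) := by
      ext m
      show HO.x • (HO.emb (MonoidAlgebra.of k G g) • m)
        = (((χ g)⁻¹ : kˣ) : k) • (HO.emb (MonoidAlgebra.of k G g) • HO.x • m)
      rw [← mul_smul, HO.comm_rel g, smul_assoc, mul_smul]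
    have hdet := congrArg LinearMap.det hrel
    rw [LinearMap.det_comp, LinearMap.det_smul, LinearMap.det_comp, ← hn] at hdet
    have hdetρ : LinearMap.det (ρ g) ≠ 0 := by
      have h1 : (ρ g) * (ρ g⁻¹) = 1 := by
        rw [← map_mul, mul_inv_cancel, map_one]
      have h2 := congrArg LinearMap.det h1
      rw [map_mul, map_one] at h2
      exact left_ne_zero_of_mul_eq_one h2
    have hne : LinearMap.det (ρ g) * LinearMap.det X ≠ 0 := mul_ne_zero hdetρ hdetX
    have hc : (((χ g)⁻¹ : kˣ) : k) ^ n = 1 := by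
      have : (((χ g)⁻¹ : kˣ) : k) ^ n * (LinearMap.det (ρ g) * LinearMap.det X)
          = 1 * (LinearMap.det (ρ g) * LinearMap.det X) := by
        rw [one_mul, ← hdet, mul_comm]
      exact mul_right_cancel₀ hne this
    have hinv : (((χ g : kˣ) : k))⁻¹ ^ n = 1 := by
      rw [← Units.val_inv_eq_inv_val]
      exact hc
    rw [inv_pow, inv_eq_one] at hinv
    exact hinv
  refine isOfFinOrder_iff_pow_eq_one.mpr ⟨n, hnpos, ?_⟩
  ext g
  simp only [MonoidHom.pow_apply, MonoidHom.one_apply, Units.val_pow_eq_pow_val, Units.val_one]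
  exact key g

end HopfOrePaper
end

section
/- Assume |χ| = |q| = s < ∞. Let i, j ∈ I and α, β ∈ k^×. Then V(i,β) is a simple H-module, and V(i,β) ≅ V(j,α) as H-modules if and only if [i] = [j] and β = α. -/
open scoped TensorProduct

namespace HopfOrePaper

variable {k G H : Type} [Field k] [Group G] [Ring H] [Algebra k H] {χ : G →* kˣ}

section AuxProofs

noncomputable def HopfOre.A (HO : HopfOre k G H χ) (g : G) : H := HO.emb (MonoidAlgebra.of k G g)

lemma HopfOre.A_mul_x (HO : HopfOre k G H χ) (g : G) :
    HO.A g * HO.x = ((χ g : kˣ) : k) • (HO.x * HO.A g) := by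
  have h := HO.comm_rel g
  rw [show HO.x * HO.A g = HO.x * HO.emb (MonoidAlgebra.of k G g) from rfl, h, smul_smul]
  simp [HopfOre.A]

lemma HopfOre.A_mul_xpow (HO : HopfOre k G H χ) (g : G) (n : ℕ) :
    HO.A g * HO.x ^ n = (((χ g ^ n : kˣ)) : k) • (HO.x ^ n * HO.A g) := by
  induction n with
  | zero => simp
  | succ n ih =>
    rw [pow_succ, ← mul_assoc, ih, smul_mul_assoc, mul_assoc, HO.A_mul_x, pow_succ,
      Units.val_mul, mul_smul, mul_smul_comm, mul_assoc]

variable {W : Type} [AddCommGroup W] [Module k W] [Module H W] [IsScalarTower k H W]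

lemma HopfOre.A_smul_xpow_smul (HO : HopfOre k G H χ) (g : G) (n : ℕ) (w : W) :
    HO.A g • (HO.x ^ n • w) = (((χ g ^ n : kˣ)) : k) • (HO.x ^ n • (HO.A g • w)) := by
  rw [← mul_smul, HO.A_mul_xpow, smul_assoc, mul_smul]


section Std
variable {V : Type} [AddCommGroup V] [Module k V]
variable {HO : HopfOre k G H χ} {ρ : Representation k G V} {e : V →ₗ[k] W}
  {β : k} {s : ℕ}

lemma IsStdQuot.xs_smul (hW : IsStdQuot HO ρ e (HO.x ^ s - algebraMap k H β) s) (w : W) :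
    HO.x ^ s • w = β • w := by
  have := hW.ann w
  rw [sub_smul, sub_eq_zero, algebraMap_smul] at this
  exact this

/-- The sum map as a linear map. -/
noncomputable def stdSum (HO : HopfOre k G H χ) (e : V →ₗ[k] W) (d : ℕ) :
    (Fin d → V) →ₗ[k] W where
  toFun f := ∑ j : Fin d, HO.x ^ (j : ℕ) • e (f j)
  map_add' f g := by
    simp only [Pi.add_apply, map_add, smul_add, Finset.sum_add_distrib]
  map_smul' c f := by
    simp only [Pi.smul_apply, map_smul, RingHom.id_apply, Finset.smul_sum, smul_comm c]

/-- The decomposition `W = ⊕ x^j e(V)` as a linear equivalence. -/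
noncomputable def IsStdQuot.T {c : H} {d : ℕ} (hW : IsStdQuot HO ρ e c d) :
    (Fin d → V) ≃ₗ[k] W :=
  LinearEquiv.ofBijective (stdSum HO e d) hW.xbasis

lemma IsStdQuot.T_apply {c : H} {d : ℕ} (hW : IsStdQuot HO ρ e c d) (f : Fin d → V) :
    hW.T f = ∑ j : Fin d, HO.x ^ (j : ℕ) • e (f j) := rfl

lemma IsStdQuot.T_single {c : H} {d : ℕ} (hW : IsStdQuot HO ρ e c d) (j : Fin d) (v : V) :
    hW.T (Pi.single j v) = HO.x ^ (j : ℕ) • e v := by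
  rw [hW.T_apply, Finset.sum_eq_single j]
  · rw [Pi.single_eq_same]
  · intro l _ hl
    rw [Pi.single_eq_of_ne hl, map_zero, smul_zero]
  · intro h; exact absurd (Finset.mem_univ j) h

lemma IsStdQuot.A_smul_T {c : H} {d : ℕ} (hW : IsStdQuot HO ρ e c d) (g : G)
    (f : Fin d → V) :
    HO.A g • hW.T f = hW.T fun j => (((χ g ^ (j:ℕ) : kˣ)) : k) • ρ g (f j) := by
  rw [hW.T_apply, hW.T_apply, Finset.smul_sum]
  refine Finset.sum_congr rfl fun j _ => ?_
  rw [HO.A_smul_xpow_smul, map_smul, smul_comm ((((χ g ^ (j:ℕ) : kˣ)) : k)) ,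
    show HO.A g • e (f j) = e (ρ g (f j)) from (hW.equivariant g (f j)).symm]

end Std

lemma mu_inj {q : kˣ} {s : ℕ} (hq : orderOf q = s) {lam : k} (hlam : lam ≠ 0)
    {i j : Fin s} (h : (((q ^ (i:ℕ) : kˣ)) : k) * lam = (((q ^ (j:ℕ) : kˣ)) : k) * lam) :
    i = j := by
  have h2 : (((q ^ (i:ℕ) : kˣ)) : k) = (((q ^ (j:ℕ) : kˣ)) : k) :=
    mul_right_cancel₀ hlam h
  have h3 : q ^ (i:ℕ) = q ^ (j:ℕ) := Units.ext h2
  exact Fin.ext (pow_injOn_Iio_orderOf (by simpa [hq] using i.2) (by simpa [hq] using j.2) h3)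

section Schur
variable [IsAlgClosed k] {V : Type} [AddCommGroup V] [Module k V] [FiniteDimensional k V]

lemma schur_scalar {ρ : Representation k G V} (hρ : IsSimpleRep ρ) {a : G}
    (ha : a ∈ Subgroup.center G) : ∃ lam : k, lam ≠ 0 ∧ ∀ v : V, ρ a v = lam • v := by
  have : Nontrivial V := hρ.1
  obtain ⟨μ, hμ⟩ := Module.End.exists_eigenvalue (ρ a)
  have hstab : ∀ g : G, ∀ v ∈ Module.End.eigenspace (ρ a) μ,
      ρ g v ∈ Module.End.eigenspace (ρ a) μ := by
    intro g v hv
    rw [Module.End.mem_eigenspace_iff] at hv ⊢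
    have hc : a * g = g * a := ((Subgroup.mem_center_iff.mp ha) g).symm
    calc ρ a (ρ g v) = ρ (a * g) v := by rw [map_mul]; rfl
    _ = ρ g (ρ a v) := by rw [hc, map_mul]; rfl
    _ = μ • ρ g v := by rw [hv, map_smul]
  rcases hρ.2 _ hstab with h | h
  · exact absurd h hμ
  · refine ⟨μ, ?_, fun v => Module.End.mem_eigenspace_iff.mp (h ▸ Submodule.mem_top)⟩
    intro hμ0
    obtain ⟨v, hv⟩ := exists_ne (0 : V)
    have h1 : ρ a v = 0 := by
      rw [Module.End.mem_eigenspace_iff.mp (h ▸ Submodule.mem_top : v ∈ _), hμ0, zero_smul]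
    have : v = 0 := by
      have := congrArg (ρ a⁻¹) h1
      rw [map_zero] at this
      rw [← this]
      calc v = ρ (a⁻¹ * a) v := by rw [inv_mul_cancel, map_one]; rfl
      _ = ρ a⁻¹ (ρ a v) := by rw [map_mul]; rfl
    exact hv this

end Schur

section Simple
variable {V : Type} [AddCommGroup V] [Module k V]
variable {HO : HopfOre k G H χ} {ρ : Representation k G V} {e : V →ₗ[k] W}
  {β : k} {s : ℕ} {a : G} {lam : k}

lemma aeval_smul_eig {w0 : W} {c : k} (h : HO.A a • w0 = c • w0) (p : Polynomial k) :
    Polynomial.aeval (HO.A a) p • w0 = p.eval c • w0 := by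
  induction p using Polynomial.induction_on with
  | C r => rw [Polynomial.aeval_C, Polynomial.eval_C, algebraMap_smul]
  | add p q hp hq => rw [map_add, add_smul, hp, hq, Polynomial.eval_add, add_smul]
  | monomial n r ih =>
    rw [pow_succ, ← mul_assoc, map_mul, Polynomial.aeval_X, mul_smul, h,
      smul_comm (Polynomial.aeval (HO.A a) (Polynomial.C r * Polynomial.X ^ n)) c w0, ih, smul_smul]
    simp [mul_comm c, mul_assoc]

lemma xje_eig (hW : IsStdQuot HO ρ e (HO.x ^ s - algebraMap k H β) s)
    (hlam : ∀ v : V, ρ a v = lam • v) (j : ℕ) (v : V) :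
    HO.A a • (HO.x ^ j • e v)
      = ((((χ a ^ j : kˣ)) : k) * lam) • (HO.x ^ j • e v) := by
  rw [HO.A_smul_xpow_smul,
    show HO.A a • e v = e (ρ a v) from (hW.equivariant a v).symm, hlam, map_smul,
    smul_comm (HO.x ^ j) lam, smul_smul]

lemma comp_mem (hW : IsStdQuot HO ρ e (HO.x ^ s - algebraMap k H β) s)
    (hqord : orderOf (χ a) = s) (hlam0 : lam ≠ 0) (hlam : ∀ v : V, ρ a v = lam • v)
    (U : Submodule H W) (f : Fin s → V) (hf : hW.T f ∈ U) (j : Fin s) :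
    HO.x ^ (j : ℕ) • e (f j) ∈ U := by
  classical
  set μ : Fin s → k := fun l => (((χ a ^ (l:ℕ) : kˣ)) : k) * lam with hμ
  set Q : Polynomial k := ∏ l ∈ Finset.univ.erase j, (Polynomial.X - Polynomial.C (μ l))
    with hQ
  set P : H := Polynomial.aeval (HO.A a) Q with hP
  have hPU : P • hW.T f ∈ U := U.smul_mem P hf
  have heval : ∀ l : Fin s, Q.eval (μ l) = ∏ l' ∈ Finset.univ.erase j, (μ l - μ l') := by
    intro l
    rw [hQ, Polynomial.eval_prod]
    exact Finset.prod_congr rfl fun l' _ => by rw [Polynomial.eval_sub, Polynomial.eval_X,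
      Polynomial.eval_C]
  have hPT : P • hW.T f
      = (∏ l ∈ Finset.univ.erase j, (μ j - μ l)) • (HO.x ^ (j:ℕ) • e (f j)) := by
    rw [hW.T_apply, Finset.smul_sum]
    rw [Finset.sum_eq_single j]
    · rw [aeval_smul_eig (xje_eig hW hlam (j:ℕ) (f j)) Q, heval j]
    · intro l _ hl
      rw [aeval_smul_eig (xje_eig hW hlam (l:ℕ) (f l)) Q, heval l,
        Finset.prod_eq_zero (Finset.mem_erase.mpr ⟨hl, Finset.mem_univ l⟩)
          (sub_self (μ l)), zero_smul]
    · intro h; exact absurd (Finset.mem_univ j) h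
  set c : k := ∏ l ∈ Finset.univ.erase j, (μ j - μ l) with hc
  have hc0 : c ≠ 0 := by
    refine Finset.prod_ne_zero_iff.mpr fun l hl => ?_
    rw [sub_ne_zero]
    intro hEq
    exact (Finset.mem_erase.mp hl).1 (mu_inj hqord hlam0 hEq).symm
  have hmem : c • (HO.x ^ (j:ℕ) • e (f j)) ∈ U := by rw [← hPT]; exact hPU
  have := U.smul_mem (algebraMap k H c⁻¹) hmem
  rwa [algebraMap_smul, smul_smul, inv_mul_cancel₀ hc0, one_smul] at this

lemma e_comp_mem (hW : IsStdQuot HO ρ e (HO.x ^ s - algebraMap k H β) s)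
    (hβ : β ≠ 0) (U : Submodule H W) (j : Fin s) (v : V)
    (h : HO.x ^ (j : ℕ) • e v ∈ U) : e v ∈ U := by
  have h1 : HO.x ^ (s - (j:ℕ)) • (HO.x ^ (j:ℕ) • e v) ∈ U := U.smul_mem _ h
  rw [← mul_smul, ← pow_add, Nat.sub_add_cancel (le_of_lt j.2), hW.xs_smul] at h1
  have := U.smul_mem (algebraMap k H β⁻¹) h1
  rwa [algebraMap_smul, smul_smul, inv_mul_cancel₀ hβ, one_smul] at this

lemma std_simple [IsAlgClosed k] [FiniteDimensional k V] (hρ : IsSimpleRep ρ)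
    (ha : a ∈ Subgroup.center G) (hs : 0 < s)
    (hqord : orderOf (χ a) = s) (hβ : β ≠ 0)
    (hW : IsStdQuot HO ρ e (HO.x ^ s - algebraMap k H β) s) :
    IsSimpleModule H W := by
  obtain ⟨lam, hlam0, hlam⟩ := schur_scalar hρ ha
  have : Nontrivial V := hρ.1
  obtain ⟨v0, hv0⟩ := exists_ne (0 : V)
  have hnt : Nontrivial W := by
    refine ⟨hW.T (Pi.single ⟨0, hs⟩ v0), 0, fun hEq => hv0 ?_⟩
    have := hW.T.injective (by rw [hEq, map_zero] : hW.T (Pi.single ⟨0, hs⟩ v0) = hW.T 0)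
    have := congrFun this ⟨0, hs⟩
    rwa [Pi.single_eq_same, Pi.zero_apply] at this
  rw [isSimpleModule_iff]
  constructor
  intro U
  by_cases hU : U = ⊥
  · exact Or.inl hU
  · right
    obtain ⟨w, hwU, hw0⟩ := Submodule.exists_mem_ne_zero_of_ne_bot hU
    set f := hW.T.symm w with hf
    have hTf : hW.T f ∈ U := by rw [hf, hW.T.apply_symm_apply]; exact hwU
    have hfne : f ≠ 0 := by
      intro h
      exact hw0 (by rw [← hW.T.apply_symm_apply w, ← hf, h, map_zero])
    obtain ⟨j, hj⟩ := Function.ne_iff.mp hfne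
    have hcomp := comp_mem hW hqord hlam0 hlam U f hTf j
    have hev : e (f j) ∈ U := e_comp_mem hW hβ U j (f j) hcomp
    set p : Submodule k V := (U.restrictScalars k).comap e with hp
    have hstab : ∀ g : G, ∀ v ∈ p, ρ g v ∈ p := by
      intro g v hv
      simp only [hp, Submodule.mem_comap, Submodule.restrictScalars_mem] at hv ⊢
      rw [hW.equivariant]
      exact U.smul_mem _ hv
    rcases hρ.2 p hstab with heq | heq
    · exfalso
      apply hj
      have : f j ∈ p := hev
      rw [heq] at this
      simpa using this
    · rw [eq_top_iff]
      intro w' _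
      rw [← hW.T.apply_symm_apply w', hW.T_apply]
      refine Submodule.sum_mem U fun l _ => ?_
      have : hW.T.symm w' l ∈ p := heq ▸ Submodule.mem_top
      exact U.smul_mem _ this


lemma eig_coord (hW : IsStdQuot HO ρ e (HO.x ^ s - algebraMap k H β) s)
    (hlam : ∀ v : V, ρ a v = lam • v) {w : W} {ν : k}
    (hw : HO.A a • w = ν • w) (l : Fin s)
    (hne : (((χ a ^ (l:ℕ) : kˣ)) : k) * lam ≠ ν) : hW.T.symm w l = 0 := by
  set f := hW.T.symm w with hf
  have hwT : w = hW.T f := (hW.T.apply_symm_apply w).symm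
  have h1 : hW.T (fun j : Fin s => ((((χ a ^ ((j:ℕ)) : kˣ)) : k) * lam) • f j) = hW.T (fun j : Fin s => ν • f j) := by
    have h2 := hW.A_smul_T a f
    have h3 : (fun j : Fin s => (((χ a ^ (j:ℕ) : kˣ)) : k) • ρ a (f j))
        = fun j : Fin s => ((((χ a ^ (j:ℕ) : kˣ)) : k) * lam) • f j := by
      funext j; rw [hlam, smul_smul]
    rw [h3] at h2
    rw [← h2, ← hwT, hw, hwT, hW.T_apply, hW.T_apply, Finset.smul_sum]
    refine Finset.sum_congr rfl fun j _ => ?_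
    rw [map_smul, smul_comm]
  have h4 := congrFun (hW.T.injective h1) l
  have h5 : ((((χ a ^ (l:ℕ) : kˣ)) : k) * lam - ν) • f l = 0 := by
    rw [sub_smul, h4, sub_self]
  rcases smul_eq_zero.mp h5 with h | h
  · exact absurd (sub_eq_zero.mp h) hne
  · exact h

lemma e_eq_T_single (hs : 0 < s) {c : H} (hW : IsStdQuot HO ρ e c s) (v : V) :
    e v = hW.T (Pi.single ⟨0, hs⟩ v) := by
  rw [hW.T_single]
  simp

lemma e_inj (hs : 0 < s) {c : H} (hW : IsStdQuot HO ρ e c s) : Function.Injective e := by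
  intro v v' h
  rw [e_eq_T_single hs hW, e_eq_T_single hs hW] at h
  have := congrFun (hW.T.injective h) ⟨0, hs⟩
  simpa using this

end Simple

section Iso
variable [IsAlgClosed k]
variable {V V' : Type} [AddCommGroup V] [Module k V] [FiniteDimensional k V]
  [AddCommGroup V'] [Module k V'] [FiniteDimensional k V']
variable {W' : Type} [AddCommGroup W'] [Module k W'] [Module H W'] [IsScalarTower k H W']
variable {HO : HopfOre k G H χ} {ρ : Representation k G V} {ρ' : Representation k G V'}
  {e : V →ₗ[k] W} {e' : V' →ₗ[k] W'} {α β : k} {s : ℕ} {a : G}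

lemma iso_forward (ha : a ∈ Subgroup.center G) (hs : 0 < s)
    (hqord : orderOf (χ a) = s) (hα : α ≠ 0) (hβ : β ≠ 0)
    (hρ : IsSimpleRep ρ) (hρ' : IsSimpleRep ρ')
    (hW : IsStdQuot HO ρ e (HO.x ^ s - algebraMap k H β) s)
    (hW' : IsStdQuot HO ρ' e' (HO.x ^ s - algebraMap k H α) s)
    (f : W ≃ₗ[H] W') :
    TwistEquiv χ ρ ρ' ∧ β = α := by
  classical
  obtain ⟨lam, hlam0, hlam⟩ := schur_scalar hρ ha
  obtain ⟨lam', hlam0', hlam'⟩ := schur_scalar hρ' ha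
  have : Nontrivial V := hρ.1
  have : Nontrivial V' := hρ'.1
  -- k-linearity of f
  have hfk : ∀ (c : k) (w : W), f (c • w) = c • f w := by
    intro c w
    rw [← algebraMap_smul H c w, map_smul, algebraMap_smul]
  have hfk' : ∀ (c : k) (w : W'), f.symm (c • w) = c • f.symm w := by
    intro c w
    rw [← algebraMap_smul H c w, map_smul, algebraMap_smul]
  -- β = α
  obtain ⟨v0, hv0⟩ := exists_ne (0 : V)
  have hev0 : e v0 ≠ 0 := fun h => hv0 (e_inj hs hW (by rw [h, map_zero]))
  have hβα : β = α := by
    have h1 : f (HO.x ^ s • e v0) = HO.x ^ s • f (e v0) := map_smul f _ _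
    rw [hW.xs_smul, hW'.xs_smul, hfk] at h1
    have h2 : (β - α) • f (e v0) = 0 := by rw [sub_smul, h1, sub_self]
    rcases smul_eq_zero.mp h2 with h | h
    · exact sub_eq_zero.mp h
    · exact absurd (f.injective (by rw [h, map_zero])) hev0
  refine ⟨?_, hβα⟩
  -- eigenvector transport
  have hAe' : ∀ v' : V', HO.A a • e' v' = lam' • e' v' := by
    intro v'
    rw [show HO.A a • e' v' = e' (ρ' a v') from (hW'.equivariant a v').symm, hlam', map_smul]
  have hfsymm_eig : ∀ v' : V', HO.A a • f.symm (e' v') = lam' • f.symm (e' v') := by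
    intro v'
    rw [← map_smul f.symm (HO.A a), hAe', hfk']
  -- find t
  obtain ⟨v0', hv0'⟩ := exists_ne (0 : V')
  have hw0 : f.symm (e' v0') ≠ 0 := by
    intro h
    exact hv0' (e_inj hs hW' (by
      rw [map_zero]
      have := congrArg f h
      rwa [f.apply_symm_apply, map_zero] at this))
  obtain ⟨t, ht⟩ : ∃ t : Fin s, hW.T.symm (f.symm (e' v0')) t ≠ 0 := by
    by_contra h
    push_neg at h
    apply hw0
    have : hW.T.symm (f.symm (e' v0')) = 0 := funext h
    rw [← hW.T.apply_symm_apply (f.symm (e' v0')), this, map_zero]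
  have htval : (((χ a ^ (t:ℕ) : kˣ)) : k) * lam = lam' := by
    by_contra hne
    exact ht (eig_coord hW hlam (hfsymm_eig v0') t hne)
  -- the map F0
  set F0 : V → V' := fun v => hW'.T.symm (f (HO.x ^ (t:ℕ) • e v)) ⟨0, hs⟩ with hF0
  have hkey : ∀ v : V, e' (F0 v) = f (HO.x ^ (t:ℕ) • e v) := by
    intro v
    set w' := f (HO.x ^ (t:ℕ) • e v) with hw'
    have heig : HO.A a • w' = lam' • w' := by
      rw [hw', ← map_smul f (HO.A a), xje_eig hW hlam, htval, hfk]
    have hcoord : ∀ l : Fin s, l ≠ ⟨0, hs⟩ → hW'.T.symm w' l = 0 := by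
      intro l hl
      refine eig_coord hW' hlam' heig l ?_
      intro hEq
      have h0 : (((χ a ^ ((⟨0, hs⟩ : Fin s):ℕ) : kˣ)) : k) * lam' = lam' := by
        simp
      exact hl (mu_inj hqord hlam0' (hEq.trans h0.symm))
    have : hW'.T.symm w' = Pi.single ⟨0, hs⟩ (F0 v) := by
      funext l
      by_cases hl : l = ⟨0, hs⟩
      · subst hl; rw [Pi.single_eq_same]
      · rw [Pi.single_eq_of_ne hl]; exact hcoord l hl
    rw [e_eq_T_single hs hW', ← this, hW'.T.apply_symm_apply]
  -- injectivity and surjectivity of F0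
  have hinj : Function.Injective F0 := by
    intro v v' h
    have h1 : f (HO.x ^ (t:ℕ) • e v) = f (HO.x ^ (t:ℕ) • e v') := by
      rw [← hkey, ← hkey, h]
    have h2 := f.injective h1
    have h3 := congrArg (fun w => HO.x ^ (s - (t:ℕ)) • w) h2
    simp only [← mul_smul, ← pow_add] at h3
    rw [Nat.sub_add_cancel (le_of_lt t.2), hW.xs_smul, hW.xs_smul] at h3
    have h4 : e v = e v' := by
      have := congrArg (fun w => β⁻¹ • w) h3
      simpa [smul_smul, inv_mul_cancel₀ hβ] using this
    exact e_inj hs hW h4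
  have hsurj : Function.Surjective F0 := by
    intro v'
    set w0 := f.symm (e' v') with hw0def
    set g0 := hW.T.symm w0 with hg0
    have hcoord : ∀ l : Fin s, l ≠ t → g0 l = 0 := by
      intro l hl
      refine eig_coord hW hlam (hfsymm_eig v') l ?_
      intro hEq
      exact hl (mu_inj hqord hlam0 (hEq.trans htval.symm))
    have hw0eq : w0 = HO.x ^ (t:ℕ) • e (g0 t) := by
      rw [← hW.T_single]
      rw [← hW.T.apply_symm_apply w0, ← hg0]
      congr 1
      funext l
      by_cases hl : l = t
      · subst hl; rw [Pi.single_eq_same]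
      · rw [Pi.single_eq_of_ne hl]; exact hcoord l hl
    refine ⟨g0 t, ?_⟩
    have := hkey (g0 t)
    rw [← hw0eq, hw0def, f.apply_symm_apply] at this
    exact e_inj hs hW' (by rw [this] : e' (F0 (g0 t)) = e' v')
  -- linearity of F0
  have hadd : ∀ v w : V, F0 (v + w) = F0 v + F0 w := by
    intro v w
    apply e_inj hs hW'
    rw [map_add, hkey, hkey, hkey, map_add, smul_add, map_add]
  have hsmul : ∀ (c : k) (v : V), F0 (c • v) = c • F0 v := by
    intro c v
    apply e_inj hs hW'
    calc e' (F0 (c • v)) = f (HO.x ^ (t:ℕ) • e (c • v)) := hkey _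
    _ = f (HO.x ^ (t:ℕ) • (c • e v)) := by rw [map_smul e]
    _ = f (c • (HO.x ^ (t:ℕ) • e v)) := by rw [smul_comm]
    _ = c • f (HO.x ^ (t:ℕ) • e v) := hfk c _
    _ = c • e' (F0 v) := by rw [hkey]
    _ = e' (c • F0 v) := (map_smul e' c _).symm
  set Flin : V ≃ₗ[k] V' := LinearEquiv.ofBijective
    { toFun := F0, map_add' := hadd, map_smul' := hsmul } ⟨hinj, hsurj⟩ with hFlin
  refine ⟨(t : ℕ), Flin, ?_⟩
  intro g v
  apply e_inj hs hW'
  have hz : ((χ g ^ (((t:ℕ)):ℤ) : kˣ) : k) = ((χ g ^ (t:ℕ) : kˣ) : k) := by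
    rw [zpow_natCast]
  show e' (ρ' g (F0 v)) = e' (((χ g ^ (((t:ℕ)):ℤ) : kˣ) : k) • F0 (ρ g v))
  calc e' (ρ' g (F0 v)) = HO.A g • e' (F0 v) := hW'.equivariant g _
  _ = HO.A g • f (HO.x ^ (t:ℕ) • e v) := by rw [hkey]
  _ = f (HO.A g • (HO.x ^ (t:ℕ) • e v)) := (map_smul f _ _).symm
  _ = f (((χ g ^ (t:ℕ) : kˣ) : k) • (HO.x ^ (t:ℕ) • (HO.A g • e v))) := by
      rw [HO.A_smul_xpow_smul]
  _ = ((χ g ^ (t:ℕ) : kˣ) : k) • f (HO.x ^ (t:ℕ) • e (ρ g v)) := by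
      rw [hfk, show HO.A g • e v = e (ρ g v) from (hW.equivariant g v).symm]
  _ = ((χ g ^ (t:ℕ) : kˣ) : k) • e' (F0 (ρ g v)) := by rw [hkey]
  _ = e' (((χ g ^ (((t:ℕ)):ℤ) : kˣ) : k) • F0 (ρ g v)) := by rw [map_smul, hz]


lemma iso_backward (hs : 0 < s) (hχord : orderOf χ = s) (hβ : β ≠ 0)
    (hW : IsStdQuot HO ρ e (HO.x ^ s - algebraMap k H β) s)
    (hW' : IsStdQuot HO ρ' e' (HO.x ^ s - algebraMap k H β) s)
    (t : ℤ) (F : V ≃ₗ[k] V')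
    (hF : ∀ (g : G) (v : V), ρ' g (F v) = ((χ g ^ t : kˣ) : k) • F (ρ g v)) :
    Nonempty (W ≃ₗ[H] W') := by
  classical
  haveI : NeZero s := ⟨hs.ne'⟩
  -- the shift u
  have hspos : (0:ℤ) < (s:ℤ) := by exact_mod_cast hs
  have hu0 : 0 ≤ (-t) % (s:ℤ) := Int.emod_nonneg _ hspos.ne'
  set u : ℕ := ((-t) % (s:ℤ)).toNat with hu_def
  have huz : (u:ℤ) = (-t) % (s:ℤ) := Int.toNat_of_nonneg hu0
  have hu_lt : u < s := by
    have h1 := Int.emod_lt_of_pos (-t) hspos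
    omega
  have hdvd : (s:ℤ) ∣ (u:ℤ) + t := by
    refine ⟨-((-t) / (s:ℤ)), ?_⟩
    rw [huz, Int.emod_def]; ring
  -- character identities
  have hχs : ∀ g : G, (χ g) ^ s = 1 := by
    intro g
    have h1 : χ ^ s = 1 := by rw [← hχord]; exact pow_orderOf_eq_one χ
    calc (χ g) ^ s = (χ ^ s) g := rfl
    _ = 1 := by rw [h1]; rfl
  have hχz : ∀ g : G, (χ g) ^ ((u:ℤ) + t) = 1 := by
    intro g
    obtain ⟨m, hm⟩ := hdvd
    rw [hm, zpow_mul, zpow_natCast, hχs, one_zpow]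
  have hcoef : ∀ (g : G) (j : ℕ), (χ g) ^ j * ((χ g ^ t)⁻¹) = (χ g) ^ (j + u) := by
    intro g j
    calc (χ g) ^ j * ((χ g ^ t)⁻¹) = (χ g) ^ ((j:ℤ) - t) := by
          rw [zpow_sub, zpow_natCast]
    _ = (χ g) ^ ((j:ℤ) - t) * (χ g) ^ ((u:ℤ) + t) := by rw [hχz, mul_one]
    _ = (χ g) ^ (((j + u : ℕ)):ℤ) := by rw [← zpow_add]; congr 1; push_cast; ring
    _ = (χ g) ^ (j + u) := zpow_natCast _ _
  -- shift lemma in W'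
  have hx_shift : ∀ (n : ℕ) (m : W'), HO.x ^ (n + s) • m = β • HO.x ^ n • m := by
    intro n m
    rw [pow_add, mul_smul, hW'.xs_smul, smul_comm]
  -- Φ0 and its linearity
  set Φ0 : W → W' := fun w => ∑ j : Fin s, HO.x ^ ((j:ℕ) + u) • e' (F (hW.T.symm w j))
    with hΦ0_def
  have hadd : ∀ w w' : W, Φ0 (w + w') = Φ0 w + Φ0 w' := by
    intro w w'
    rw [hΦ0_def]
    simp only [map_add, Pi.add_apply, smul_add]
    rw [← Finset.sum_add_distrib]
  have hsmul : ∀ (c : k) (w : W), Φ0 (c • w) = c • Φ0 w := by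
    intro c w
    rw [hΦ0_def]
    simp only [map_smul, Pi.smul_apply, Finset.smul_sum]
    refine Finset.sum_congr rfl fun j _ => ?_
    rw [smul_comm]
  set Φ : W →ₗ[k] W' := { toFun := Φ0, map_add' := hadd, map_smul' := hsmul } with hΦ_def
  have hΦT : ∀ fv : Fin s → V,
      Φ (hW.T fv) = ∑ j : Fin s, HO.x ^ ((j:ℕ) + u) • e' (F (fv j)) := by
    intro fv
    show Φ0 (hW.T fv) = _
    rw [hΦ0_def]
    simp only [LinearEquiv.symm_apply_apply]
  -- generator formula
  have hgen : ∀ (j : Fin s) (v : V),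
      Φ (HO.x ^ (j:ℕ) • e v) = HO.x ^ ((j:ℕ) + u) • e' (F v) := by
    intro j v
    rw [← hW.T_single j v, hΦT, Finset.sum_eq_single j]
    · rw [Pi.single_eq_same]
    · intro l _ hl
      rw [Pi.single_eq_of_ne hl, map_zero, map_zero, smul_zero]
    · intro h; exact absurd (Finset.mem_univ j) h
  have hgenN : ∀ (n : ℕ) (hn : n < s) (v : V),
      Φ (HO.x ^ n • e v) = HO.x ^ (n + u) • e' (F v) := fun n hn v => hgen ⟨n, hn⟩ v
  -- commutation with x
  have hxcomm : ∀ w : W, Φ (HO.x • w) = HO.x • Φ w := by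
    intro w
    conv_lhs => rw [← hW.T.apply_symm_apply w, hW.T_apply, Finset.smul_sum, map_sum Φ]
    conv_rhs => rw [← hW.T.apply_symm_apply w, hW.T_apply, map_sum Φ, Finset.smul_sum]
    refine Finset.sum_congr rfl fun j _ => ?_
    rw [hgen j, ← mul_smul, ← pow_succ']
    by_cases hj : (j:ℕ) + 1 < s
    · rw [hgenN ((j:ℕ)+1) hj, ← mul_smul, ← pow_succ']
      rw [show (j:ℕ) + 1 + u = (j:ℕ) + u + 1 from by omega]
    · have hj' : (j:ℕ) + 1 = s := by omega
      rw [hj', hW.xs_smul, map_smul Φ]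
      have h0 := hgenN 0 hs (hW.T.symm w j)
      rw [pow_zero, one_smul] at h0
      rw [h0, zero_add, ← mul_smul, ← pow_succ',
        show (j:ℕ) + u + 1 = u + s from by omega, hx_shift]
  -- commutation with A g
  have hFinv : ∀ (g : G) (v : V),
      F (ρ g v) = (((χ g ^ t)⁻¹ : kˣ) : k) • ρ' g (F v) := by
    intro g v
    rw [hF g v, smul_smul, ← Units.val_mul, inv_mul_cancel, Units.val_one, one_smul]
  have hgcomm : ∀ (g : G) (w : W), Φ (HO.A g • w) = HO.A g • Φ w := by
    intro g w
    set fv := hW.T.symm w with hfv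
    have hL : Φ (HO.A g • w)
        = ∑ j : Fin s, HO.x ^ ((j:ℕ)+u) •
            e' (F ((((χ g ^ (j:ℕ) : kˣ)):k) • ρ g (fv j))) := by
      rw [← hW.T.apply_symm_apply w, ← hfv, hW.A_smul_T, hΦT]
    have hR : HO.A g • Φ w
        = ∑ j : Fin s, HO.A g • (HO.x ^ ((j:ℕ)+u) • e' (F (fv j))) := by
      rw [← hW.T.apply_symm_apply w, ← hfv, hΦT, Finset.smul_sum]
    rw [hL, hR]
    refine Finset.sum_congr rfl fun j _ => ?_
    rw [map_smul F, map_smul e', hFinv, map_smul e', hW'.equivariant g (F (fv j)),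
      HO.A_smul_xpow_smul, smul_comm (HO.x ^ ((j:ℕ)+u)) ((((χ g ^ (j:ℕ) : kˣ)):k)),
      smul_comm (HO.x ^ ((j:ℕ)+u)) ((((χ g ^ t)⁻¹ : kˣ)):k), smul_smul,
      ← Units.val_mul, hcoef g (j:ℕ)]
    rfl
  -- full H-linearity
  have hxn : ∀ (n : ℕ) (w : W), Φ (HO.x ^ n • w) = HO.x ^ n • Φ w := by
    intro n
    induction n with
    | zero => intro w; rw [pow_zero, one_smul, one_smul]
    | succ n ih =>
      intro w
      rw [pow_succ', mul_smul, hxcomm, ih, ← mul_smul, ← pow_succ']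
  have hHlin : ∀ (h : H) (w : W), Φ (h • w) = h • Φ w := by
    intro h w
    have hmem : h ∈ Submodule.span k (Set.range fun p : G × ℕ =>
        HO.emb (MonoidAlgebra.of k G p.1) * HO.x ^ p.2) := by
      rw [HO.basis_span]; trivial
    induction hmem using Submodule.span_induction with
    | mem y hy =>
      obtain ⟨⟨g, n⟩, rfl⟩ := hy
      show Φ ((HO.A g * HO.x ^ n) • w) = (HO.A g * HO.x ^ n) • Φ w
      rw [mul_smul, hgcomm, hxn, mul_smul]
    | zero => rw [zero_smul, map_zero, zero_smul]
    | add y z _ _ hy hz => rw [add_smul, map_add, hy, hz, add_smul]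
    | smul c y _ hy => rw [smul_assoc, map_smul, hy, smul_assoc]
  -- reindexing and injectivity
  set uF : Fin s := ⟨u, hu_lt⟩ with huF_def
  set cF : Fin s → k := fun i => if (((i - uF : Fin s)):ℕ) + u < s then 1 else β
    with hcF_def
  have hcF0 : ∀ i, cF i ≠ 0 := by
    intro i
    rw [hcF_def]
    dsimp only
    split
    · exact one_ne_zero
    · exact hβ
  have hterm : ∀ (j : Fin s) (m : W'), HO.x ^ ((j:ℕ) + u) • m
      = (if (j:ℕ) + u < s then (1:k) else β) • HO.x ^ (((j + uF : Fin s)):ℕ) • m := by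
    intro j m
    have hval_add : ((j + uF : Fin s) : ℕ) = ((j:ℕ) + u) % s := by
      rw [Fin.val_add]
    by_cases hj : (j:ℕ) + u < s
    · rw [if_pos hj, one_smul]
      congr 2
      rw [hval_add, Nat.mod_eq_of_lt hj]
    · rw [if_neg hj]
      have h2 : ((j + uF : Fin s):ℕ) = (j:ℕ) + u - s := by
        rw [hval_add, Nat.mod_eq_sub_mod (by omega), Nat.mod_eq_of_lt (by omega)]
      rw [show (j:ℕ) + u = ((j:ℕ) + u - s) + s from by omega, hx_shift, h2]
  have hΦT' : ∀ fv : Fin s → V,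
      Φ (hW.T fv) = hW'.T (fun i => cF i • F (fv (i - uF))) := by
    intro fv
    set g0 : Fin s → W' := fun i => HO.x ^ (i:ℕ) • e' (cF i • F (fv (i - uF))) with hg0
    have hpt : ∀ j : Fin s, HO.x ^ ((j:ℕ) + u) • e' (F (fv j)) = g0 (j + uF) := by
      intro j
      have hc : cF (j + uF) = if (j:ℕ) + u < s then (1:k) else β := by
        rw [hcF_def]
        dsimp only
        rw [add_sub_cancel_right]
      show _ = HO.x ^ (((j + uF : Fin s)):ℕ) • e' (cF (j + uF) • F (fv ((j + uF) - uF)))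
      rw [add_sub_cancel_right, hc, map_smul e',
        smul_comm (HO.x ^ (((j + uF : Fin s)):ℕ)) (if (j:ℕ) + u < s then (1:k) else β),
        ← hterm j]
    calc Φ (hW.T fv) = ∑ j : Fin s, HO.x ^ ((j:ℕ) + u) • e' (F (fv j)) := hΦT fv
    _ = ∑ j : Fin s, g0 (Equiv.addRight uF j) := Finset.sum_congr rfl fun j _ => hpt j
    _ = ∑ i : Fin s, g0 i := Equiv.sum_comp (Equiv.addRight uF) g0
    _ = hW'.T (fun i => cF i • F (fv (i - uF))) := by
        rw [hW'.T_apply]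
  have hinj : Function.Injective Φ := by
    rw [injective_iff_map_eq_zero]
    intro w hw
    rw [← hW.T.apply_symm_apply w] at hw ⊢
    set fv := hW.T.symm w
    rw [hΦT'] at hw
    have h0 : (fun i => cF i • F (fv (i - uF))) = 0 :=
      hW'.T.map_eq_zero_iff.mp hw
    have hfv0 : fv = 0 := by
      funext j
      have h1 := congrFun h0 (j + uF)
      simp only [Pi.zero_apply] at h1
      rw [add_sub_cancel_right] at h1
      rcases smul_eq_zero.mp h1 with h | h
      · exact absurd h (hcF0 _)
      · rw [Pi.zero_apply]
        exact F.map_eq_zero_iff.mp h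
    rw [hfv0, map_zero]
  -- dimensions
  haveI : FiniteDimensional k W := Module.Finite.equiv hW.T
  haveI : FiniteDimensional k W' := Module.Finite.equiv hW'.T
  have hrank : Module.finrank k W = Module.finrank k W' := by
    rw [← hW.T.finrank_eq, ← hW'.T.finrank_eq, Module.finrank_pi_fintype,
      Module.finrank_pi_fintype]
    exact Finset.sum_congr rfl fun i _ => F.finrank_eq
  have hsurj : Function.Surjective Φ :=
    (LinearMap.injective_iff_surjective_of_finrank_eq_finrank hrank).mp hinj
  set ΦE := LinearEquiv.ofBijective Φ ⟨hinj, hsurj⟩ with hΦE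
  exact ⟨{ toFun := Φ, map_add' := fun x y => map_add Φ x y,
           map_smul' := fun h w => hHlin h w,
           invFun := ΦE.symm, left_inv := ΦE.left_inv, right_inv := ΦE.right_inv }⟩

end Iso

end AuxProofs

/-- **Proposition 3.4.** Assume `|χ| = |q| = s < ∞`.  For simple finite-dimensional
`kG`-modules `V_i, V_j` and `α, β ∈ k^×`, the `H`-module `V(i,β) = M(V_i)/(x^s-β)M(V_i)`
is simple, and `V(i,β) ≅ V(j,α)` if and only if `[i] = [j]` and `β = α`. -/
theorem stmt_3 {k G H : Type} [Field k] [IsAlgClosed k] [Group G] [Ring H] [Algebra k H]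
    {χ : G →* kˣ} (a : G) (ha : a ∈ Subgroup.center G) (hχa : χ a ≠ 1)
    (HO : HopfOre k G H χ) (s : ℕ) (hs : 0 < s)
    (hχord : orderOf χ = s) (hqord : orderOf (χ a) = s)
    {V V' : Type} [AddCommGroup V] [Module k V] [FiniteDimensional k V]
    [AddCommGroup V'] [Module k V'] [FiniteDimensional k V']
    (ρ : Representation k G V) (hρ : IsSimpleRep ρ)
    (ρ' : Representation k G V') (hρ' : IsSimpleRep ρ')
    (α β : k) (hα : α ≠ 0) (hβ : β ≠ 0)
    {W W' : Type} [AddCommGroup W] [Module k W] [Module H W] [IsScalarTower k H W]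
    [AddCommGroup W'] [Module k W'] [Module H W'] [IsScalarTower k H W']
    (e : V →ₗ[k] W) (hW : IsStdQuot HO ρ e (HO.x ^ s - algebraMap k H β) s)
    (e' : V' →ₗ[k] W') (hW' : IsStdQuot HO ρ' e' (HO.x ^ s - algebraMap k H α) s) :
    IsSimpleModule H W ∧
      (Nonempty (W ≃ₗ[H] W') ↔ (TwistEquiv χ ρ ρ' ∧ β = α)) := by
  refine ⟨std_simple hρ ha hs hqord hβ hW, ?_, ?_⟩
  · rintro ⟨f⟩
    exact iso_forward ha hs hqord hα hβ hρ hρ' hW hW' f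
  · rintro ⟨⟨t, F, hF⟩, hβα⟩
    subst hβα
    exact iso_backward hs hχord hβ hW hW' t F hF


end HopfOrePaper
end

section
/- Let M be a simple finite dimensional H-module. (1) If M is x-torsion, then M ≅ V_i for some i ∈ I. (2) If |χ| = |q| and M is x-torsionfree, then s := |χ| is finite and M ≅ V(i,β) for some i ∈ I and some β ∈ k^×. -/
open scoped TensorProduct

namespace HopfOrePaper

variable {k G H : Type} [Field k] [Group G] [Ring H] [Algebra k H] {χ : G →* kˣ}

section Proof35Aux

variable {k G H : Type} [Field k] [Group G] [Ring H] [Algebra k H] {χ : G →* kˣ}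

private lemma ksmul_comm {M : Type} [AddCommGroup M] [Module k M] [Module H M]
    [IsScalarTower k H M] (c : k) (h : H) (m : M) : h • (c • m) = c • (h • m) := by
  rw [← algebraMap_smul H c m, ← mul_smul, ← Algebra.commutes, mul_smul, algebraMap_smul]

private lemma resRep_apply (HO : HopfOre k G H χ) {M : Type} [AddCommGroup M] [Module k M]
    [Module H M] [IsScalarTower k H M] (g : G) (m : M) :
    resRep HO M g m = HO.emb (MonoidAlgebra.of k G g) • m := rfl

private lemma simple_aux (HO : HopfOre k G H χ) (M : Type) [AddCommGroup M] [Module k M]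
    [Module H M] [IsScalarTower k H M] (hM : IsSimpleModule H M)
    (p : Submodule k M)
    (hg : ∀ (g : G), ∀ m ∈ p, HO.emb (MonoidAlgebra.of k G g) • m ∈ p)
    (hx : ∀ m ∈ p, HO.x • m ∈ p) : p = ⊥ ∨ p = ⊤ := by
  have key : ∀ (h : H) (m : M), m ∈ p → h • m ∈ p := by
    intro h m hm
    let S : Submodule k H :=
      { carrier := {h : H | h • m ∈ p}
        add_mem' := fun {h1 h2} h1m h2m => by
          simpa [add_smul] using p.add_mem h1m h2m
        zero_mem' := by
          show (0 : H) • m ∈ p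
          simpa [zero_smul] using p.zero_mem
        smul_mem' := fun c h' hm' => by
          show (c • h') • m ∈ p
          rw [smul_assoc]
          exact p.smul_mem c hm' }
    have hx' : ∀ i : ℕ, HO.x ^ i • m ∈ p := by
      intro i
      induction i with
      | zero => simpa using hm
      | succ i ih =>
        rw [pow_succ', mul_smul]
        exact hx _ ih
    have hS : (⊤ : Submodule k H) ≤ S := by
      rw [← HO.basis_span, Submodule.span_le]
      rintro _ ⟨⟨g, i⟩, rfl⟩
      show (HO.emb (MonoidAlgebra.of k G g) * HO.x ^ i) • m ∈ p
      rw [mul_smul]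
      exact hg g _ (hx' i)
    exact hS Submodule.mem_top
  let P : Submodule H M :=
    { carrier := p
      add_mem' := fun hx hy => p.add_mem hx hy
      zero_mem' := p.zero_mem
      smul_mem' := fun h {m} hm => key h m hm }
  haveI := hM
  rcases eq_bot_or_eq_top P with hP | hP
  · left
    ext m
    simp only [Submodule.mem_bot]
    constructor
    · intro hmp
      have hm' : m ∈ P := hmp
      rw [hP] at hm'
      simpa using hm'
    · rintro rfl; exact p.zero_mem
  · right
    ext m
    simp only [Submodule.mem_top, iff_true]
    have hm' : m ∈ P := by rw [hP]; trivial
    exact hm'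

private lemma g_x_smul (HO : HopfOre k G H χ) {M : Type} [AddCommGroup M] [Module k M]
    [Module H M] [IsScalarTower k H M] (g : G) (m : M) :
    HO.emb (MonoidAlgebra.of k G g) • (HO.x • m)
      = ((χ g : kˣ) : k) • (HO.x • (HO.emb (MonoidAlgebra.of k G g) • m)) := by
  have h0 : HO.x • (HO.emb (MonoidAlgebra.of k G g) • m)
      = (((χ g)⁻¹ : kˣ) : k) • (HO.emb (MonoidAlgebra.of k G g) • (HO.x • m)) := by
    calc HO.x • (HO.emb (MonoidAlgebra.of k G g) • m)
        = (HO.x * HO.emb (MonoidAlgebra.of k G g)) • m := (mul_smul _ _ _).symm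
      _ = ((((χ g)⁻¹ : kˣ) : k) • (HO.emb (MonoidAlgebra.of k G g) * HO.x)) • m := by
          rw [HO.comm_rel g]
      _ = (((χ g)⁻¹ : kˣ) : k) • ((HO.emb (MonoidAlgebra.of k G g) * HO.x) • m) :=
          smul_assoc _ _ _
      _ = (((χ g)⁻¹ : kˣ) : k) • (HO.emb (MonoidAlgebra.of k G g) • (HO.x • m)) := by
          rw [mul_smul]
  rw [h0, ← mul_smul (((χ g) : kˣ) : k) (((χ g)⁻¹ : kˣ) : k), ← Units.val_mul, mul_inv_cancel,
    Units.val_one, one_smul]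

private lemma g_xpow_smul (HO : HopfOre k G H χ) {M : Type} [AddCommGroup M] [Module k M]
    [Module H M] [IsScalarTower k H M] (g : G) (j : ℕ) (m : M) :
    HO.emb (MonoidAlgebra.of k G g) • (HO.x ^ j • m)
      = (((χ g : kˣ) : k) ^ j) • (HO.x ^ j • (HO.emb (MonoidAlgebra.of k G g) • m)) := by
  induction j generalizing m with
  | zero => simp
  | succ j ih =>
    rw [pow_succ', mul_smul, g_x_smul HO g, ih, ksmul_comm, smul_smul, mul_smul HO.x,
      ← pow_succ' (((χ g) : kˣ) : k) j]

private lemma eigen_sum_zero {M : Type} [AddCommGroup M] [Module k M]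
    {ι : Type} [Fintype ι] (f : Module.End k M) (μ : ι → k) (hμ : Function.Injective μ)
    (m : ι → M) (hm : ∀ i, f (m i) = μ i • m i) (hsum : ∑ i, m i = 0) (i : ι) : m i = 0 := by
  classical
  by_contra hne
  have hLI : LinearIndependent k (fun j : {j // m j ≠ 0} => m j) := by
    refine f.eigenvectors_linearIndependent' (fun j : {j // m j ≠ 0} => μ j)
      (hμ.comp Subtype.coe_injective) _ (fun j => ⟨?_, j.2⟩)
    rw [Module.End.mem_eigenspace_iff]
    exact hm j
  have h2 : ∑ j : {j // m j ≠ 0}, m j = 0 := by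
    rw [← Finset.sum_subtype (Finset.univ.filter (fun j => m j ≠ 0)) (by simp) m]
    rw [Finset.sum_filter_ne_zero]
    exact hsum
  have := Fintype.linearIndependent_iff.mp hLI (fun _ => 1) (by simpa using h2) ⟨i, hne⟩
  exact one_ne_zero this

end Proof35Aux

/-- **Theorem 3.5.** Let `M` be a simple finite-dimensional `H`-module.
(1) If `M` is `x`-torsion, then `M ≅ V_i` for some `i ∈ I`, i.e. the underlying
`kG`-module of `M` is simple (and `x` acts as `0`).
(2) If `|χ| = |q|` and `M` is `x`-torsionfree, then `s = |χ|` is finite and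
`M ≅ V(i,β) = M(V_i)/(x^s-β)M(V_i)` for some simple `kG`-module `V_i` and `β ∈ k^×`. -/
theorem stmt_4 {k G H : Type} [Field k] [IsAlgClosed k] [Group G] [Ring H] [Algebra k H]
    {χ : G →* kˣ} (a : G) (ha : a ∈ Subgroup.center G) (hχa : χ a ≠ 1)
    (HO : HopfOre k G H χ)
    (M : Type) [AddCommGroup M] [Module k M] [Module H M] [IsScalarTower k H M]
    [FiniteDimensional k M] (hM : IsSimpleModule H M) :
    ((∀ m : M, HO.x • m = 0) → IsSimpleRep (resRep HO M)) ∧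
    (orderOf χ = orderOf (χ a) → (∀ m : M, HO.x • m = 0 → m = 0) →
      IsOfFinOrder χ ∧ ∃ β : k, β ≠ 0 ∧
        Nonempty (StdWitness HO M (HO.x ^ orderOf χ - algebraMap k H β) (orderOf χ))) := by
  classical
  haveI := hM
  haveI : Nontrivial M := IsSimpleModule.nontrivial H M
  constructor
  · -- Part (1)
    intro hx0
    refine ⟨inferInstance, fun p hp => ?_⟩
    exact simple_aux HO M hM p (fun g m hm => hp g m hm)
      (fun m _ => by rw [hx0 m]; exact p.zero_mem)
  · -- Part (2)
    intro hord hxinj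
    set q : k := ((χ a : kˣ) : k) with hq
    -- x as a k-linear endomorphism
    set Xe : Module.End k M :=
      { toFun := fun m => HO.x • m
        map_add' := fun m n => smul_add _ m n
        map_smul' := fun c m => by
          simp only [RingHom.id_apply]
          exact ksmul_comm c HO.x m } with hXedef
    have hXe : ∀ m : M, Xe m = HO.x • m := fun m => rfl
    have hXepow : ∀ (j : ℕ) (m : M), (Xe ^ j) m = HO.x ^ j • m := by
      intro j
      induction j with
      | zero => intro m; simp [hXe]
      | succ j ih =>
        intro m
        rw [pow_succ' Xe, Module.End.mul_apply, hXe, ih, ← mul_smul, ← pow_succ']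
    have hXeInj : ∀ (j : ℕ) (m : M), HO.x ^ j • m = 0 → m = 0 := by
      intro j
      induction j with
      | zero => intro m hm; simpa using hm
      | succ j ih =>
        intro m hm
        rw [pow_succ, mul_smul] at hm
        exact hxinj m (ih _ hm)
    -- determinant argument: q ^ finrank = 1
    have hrel : (resRep HO M a) * Xe = q • (Xe * (resRep HO M a)) := by
      apply LinearMap.ext
      intro m
      rw [Module.End.mul_apply, LinearMap.smul_apply, Module.End.mul_apply, hXe, hXe, hq]
      exact g_x_smul HO a m
    have hAunit : LinearMap.det (resRep HO M a) ≠ 0 := by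
      have h1 : (resRep HO M a) * (resRep HO M a⁻¹) = 1 := by
        rw [← map_mul, mul_inv_cancel, map_one]
      have h2 : LinearMap.det (resRep HO M a) * LinearMap.det (resRep HO M a⁻¹) = 1 := by
        rw [← map_mul, h1, map_one]
      exact left_ne_zero_of_mul_eq_one h2
    have hXeinj' : Function.Injective Xe := by
      intro m n hmn
      have : Xe (m - n) = 0 := by rw [map_sub, hmn, sub_self]
      have := hxinj (m - n) (by rw [← hXe]; exact this)
      exact sub_eq_zero.mp this
    have hXunit : LinearMap.det Xe ≠ 0 := by
      have hbij : Function.Bijective Xe :=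
        ⟨hXeinj', (LinearMap.injective_iff_surjective).mp hXeinj'⟩
      set E := LinearEquiv.ofBijective Xe hbij with hE
      have h1 : Xe * (E.symm : M →ₗ[k] M) = 1 := by
        apply LinearMap.ext
        intro m
        rw [Module.End.mul_apply, Module.End.one_apply]
        exact E.apply_symm_apply m
      have h2 : LinearMap.det Xe * LinearMap.det (E.symm : M →ₗ[k] M) = 1 := by
        rw [← map_mul, h1, map_one]
      exact left_ne_zero_of_mul_eq_one h2
    have hqn : q ^ Module.finrank k M = 1 := by
      have hdet := congrArg LinearMap.det hrel
      rw [map_mul, LinearMap.det_smul, map_mul] at hdet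
      have hc : LinearMap.det (resRep HO M a) * LinearMap.det Xe ≠ 0 :=
        mul_ne_zero hAunit hXunit
      have : q ^ Module.finrank k M * (LinearMap.det (resRep HO M a) * LinearMap.det Xe)
          = 1 * (LinearMap.det (resRep HO M a) * LinearMap.det Xe) := by
        rw [one_mul]
        linear_combination -hdet
      exact mul_right_cancel₀ hc this
    have hn : 0 < Module.finrank k M := Module.finrank_pos
    have hafin : IsOfFinOrder (χ a) := by
      refine isOfFinOrder_iff_pow_eq_one.mpr ⟨Module.finrank k M, hn, ?_⟩
      ext
      rw [Units.val_pow_eq_pow_val, ← hq, hqn, Units.val_one]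
    have hχfin : IsOfFinOrder χ := by
      rw [← orderOf_pos_iff] at hafin ⊢
      rw [hord]; exact hafin
    have hs_pos : 0 < orderOf χ := orderOf_pos_iff.mpr hχfin
    set s : ℕ := orderOf χ with hs
    -- χ g ^ s = 1
    have hχs : ∀ g : G, ((χ g : kˣ) : k) ^ s = 1 := by
      intro g
      have h1 : χ ^ s = 1 := pow_orderOf_eq_one χ
      have h2 : (χ g) ^ s = 1 := by
        rw [← MonoidHom.pow_apply, h1, MonoidHom.one_apply]
      rw [← Units.val_pow_eq_pow_val, h2, Units.val_one]
    -- x^s commutes with the G-action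
    have hcomm : ∀ (g : G) (m : M),
        HO.emb (MonoidAlgebra.of k G g) • (HO.x ^ s • m)
          = HO.x ^ s • (HO.emb (MonoidAlgebra.of k G g) • m) := by
      intro g m
      rw [g_xpow_smul HO g s m, hχs g, one_smul]
    -- x^s acts as a scalar β
    obtain ⟨β, hβeig⟩ := Module.End.exists_eigenvalue (Xe ^ s)
    have hXs : ∀ m : M, HO.x ^ s • m = β • m := by
      have hor := simple_aux HO M hM (Module.End.eigenspace (Xe ^ s) β)
        (fun g m hm => by
          rw [Module.End.mem_eigenspace_iff] at hm ⊢
          rw [hXepow] at hm ⊢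
          rw [← hcomm, hm, ksmul_comm])
        (fun m hm => by
          rw [Module.End.mem_eigenspace_iff] at hm ⊢
          rw [hXepow] at hm ⊢
          rw [← mul_smul, pow_mul_comm', mul_smul, hm, ksmul_comm])
      rcases hor with hbot | htop
      · exact absurd hbot hβeig
      · intro m
        have hm : m ∈ Module.End.eigenspace (Xe ^ s) β := by rw [htop]; trivial
        rw [Module.End.mem_eigenspace_iff, hXepow] at hm
        exact hm
    have hβ0 : β ≠ 0 := by
      intro hβ
      obtain ⟨m₀, hm₀⟩ := exists_ne (0 : M)
      apply hm₀
      apply hXeInj s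
      rw [hXs, hβ, zero_smul]
    -- a minimal nonzero G-stable subspace V
    set Stab : Submodule k M → Prop :=
      fun p => ∀ g : G, ∀ m ∈ p, HO.emb (MonoidAlgebra.of k G g) • m ∈ p with hStab
    have htopStab : (⊤ : Submodule k M) ≠ ⊥ ∧ Stab ⊤ := by
      refine ⟨?_, fun g m _ => trivial⟩
      intro htb
      obtain ⟨m₀, hm₀⟩ := exists_ne (0 : M)
      apply hm₀
      have hmem : m₀ ∈ (⊥ : Submodule k M) := htb ▸ (Submodule.mem_top : m₀ ∈ (⊤ : Submodule k M))
      simpa using hmem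
    have hTne : {n : ℕ | ∃ p : Submodule k M, p ≠ ⊥ ∧ Stab p ∧ Module.finrank k p = n}.Nonempty :=
      ⟨Module.finrank k (⊤ : Submodule k M), ⊤, htopStab.1, htopStab.2, rfl⟩
    obtain ⟨V, hVne, hVstab, hVrank⟩ := Nat.sInf_mem hTne
    have hmin : ∀ p : Submodule k M, p ≠ ⊥ → Stab p →
        Module.finrank k V ≤ Module.finrank k p := by
      intro p hp hps
      rw [hVrank]
      exact Nat.sInf_le ⟨p, hp, hps, rfl⟩
    haveI : Nontrivial V := Submodule.nontrivial_iff_ne_bot.mpr hVne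
    -- the representation of G on V
    set ρV : Representation k G V :=
      { toFun := fun g => LinearMap.restrict (resRep HO M g) (hVstab g)
        map_one' := by
          apply LinearMap.ext
          intro v
          apply Subtype.ext
          show resRep HO M 1 (v : M) = (v : M)
          rw [map_one]; rfl
        map_mul' := fun g g' => by
          apply LinearMap.ext
          intro v
          apply Subtype.ext
          show resRep HO M (g * g') (v : M) = resRep HO M g (resRep HO M g' (v : M))
          rw [map_mul]; rfl } with hρV
    have hρVapp : ∀ (g : G) (v : V), ((ρV g v : V) : M) = HO.emb (MonoidAlgebra.of k G g) • (v : M) :=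
      fun g v => rfl
    -- V is a simple G-representation
    have hsimp : IsSimpleRep ρV := by
      refine ⟨inferInstance, fun p hp => ?_⟩
      by_cases hpbot : p = ⊥
      · exact Or.inl hpbot
      right
      by_contra hptop
      have hp'ne : p.map V.subtype ≠ ⊥ := by
        intro h
        exact hpbot (Submodule.map_injective_of_injective V.injective_subtype
          (by rw [h, Submodule.map_bot]))
      have hp'stab : Stab (p.map V.subtype) := by
        intro g m hm
        obtain ⟨v, hv, rfl⟩ := hm
        exact ⟨ρV g v, hp g v hv, hρVapp g v⟩
      have h1 := hmin (p.map V.subtype) hp'ne hp'stab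
      rw [Submodule.finrank_map_subtype_eq] at h1
      have h2 : Module.finrank k p < Module.finrank k V :=
        Submodule.finrank_lt hptop
      exact absurd h1 (not_le.mpr h2)
    -- the central element a acts on V by a scalar lam
    obtain ⟨lam, hlam_eig⟩ := Module.End.exists_eigenvalue (ρV a)
    have hEstab : ∀ g : G, ∀ v ∈ Module.End.eigenspace (ρV a) lam,
        ρV g v ∈ Module.End.eigenspace (ρV a) lam := by
      intro g v hv
      rw [Module.End.mem_eigenspace_iff] at hv ⊢
      have hcommg : ρV a (ρV g v) = ρV g (ρV a v) := by
        rw [← Module.End.mul_apply, ← map_mul, ← Subgroup.mem_center_iff.mp ha g, map_mul,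
          Module.End.mul_apply]
      rw [hcommg, hv, map_smul]
    have hEtop : Module.End.eigenspace (ρV a) lam = ⊤ := by
      rcases hsimp.2 (Module.End.eigenspace (ρV a) lam) hEstab with hb | ht
      · exact absurd hb hlam_eig
      · exact ht
    have hlam : ∀ v : V, ρV a v = lam • v := by
      intro v
      have hv : v ∈ Module.End.eigenspace (ρV a) lam := by rw [hEtop]; trivial
      rwa [Module.End.mem_eigenspace_iff] at hv
    have hlamM : ∀ m : M, m ∈ V → HO.emb (MonoidAlgebra.of k G a) • m = lam • m := by
      intro m hm
      calc HO.emb (MonoidAlgebra.of k G a) • m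
          = ((ρV a ⟨m, hm⟩ : V) : M) := (hρVapp a ⟨m, hm⟩).symm
        _ = ((lam • (⟨m, hm⟩ : V) : V) : M) := by rw [hlam]
        _ = lam • m := rfl
    have hlam0 : lam ≠ 0 := by
      intro h0
      obtain ⟨v₀, hv₀⟩ := exists_ne (0 : V)
      apply hv₀
      have h1 : ρV a v₀ = 0 := by rw [hlam, h0, zero_smul]
      have h2 : ρV a⁻¹ (ρV a v₀) = v₀ := by
        rw [← Module.End.mul_apply, ← map_mul, inv_mul_cancel, map_one, Module.End.one_apply]
      rw [h1, map_zero] at h2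
      exact h2.symm
    -- eigenvector property of x^j • V for the action of a
    have hEig : ∀ (j : ℕ) (m : M), m ∈ V →
        HO.emb (MonoidAlgebra.of k G a) • (HO.x ^ j • m)
          = (q ^ j * lam) • (HO.x ^ j • m) := by
      intro j m hm
      rw [g_xpow_smul HO a j m, hlamM m hm, ksmul_comm, smul_smul, hq]
    have hdist : Function.Injective fun i : Fin s => q ^ (i : ℕ) * lam := by
      intro i j hij
      have h1 : q ^ (i : ℕ) = q ^ (j : ℕ) := mul_right_cancel₀ hlam0 hij
      have h2 : (χ a) ^ (i : ℕ) = (χ a) ^ (j : ℕ) := by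
        apply Units.ext
        rw [Units.val_pow_eq_pow_val, Units.val_pow_eq_pow_val, ← hq, h1]
      have hi : (i : ℕ) < orderOf (χ a) := by rw [← hord]; exact i.2
      have hj : (j : ℕ) < orderOf (χ a) := by rw [← hord]; exact j.2
      exact Fin.ext (pow_injOn_Iio_orderOf hi hj h2)
    -- injectivity
    have hinj : Function.Injective
        (fun f : Fin s → V => ∑ j : Fin s, HO.x ^ (j : ℕ) • (V.subtype (f j))) := by
      intro f f' hff
      have hsum : ∑ j : Fin s, HO.x ^ (j : ℕ) • (((f j - f' j) : V) : M) = 0 := by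
        have hterm : ∀ j : Fin s, HO.x ^ (j : ℕ) • (((f j - f' j) : V) : M)
            = HO.x ^ (j : ℕ) • ((f j : M)) - HO.x ^ (j : ℕ) • ((f' j : M)) := by
          intro j
          rw [Submodule.coe_sub, smul_sub]
        rw [Finset.sum_congr rfl (fun j _ => hterm j), Finset.sum_sub_distrib, sub_eq_zero]
        exact hff
      have hzero : ∀ j : Fin s, HO.x ^ (j : ℕ) • (((f j - f' j) : V) : M) = 0 := by
        intro j
        refine eigen_sum_zero
          { toFun := fun m => HO.emb (MonoidAlgebra.of k G a) • m
            map_add' := fun m n => smul_add _ m n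
            map_smul' := fun c m => by
              simp only [RingHom.id_apply]
              exact ksmul_comm c _ m }
          (fun i : Fin s => q ^ (i : ℕ) * lam) hdist
          (fun i : Fin s => HO.x ^ (i : ℕ) • (((f i - f' i) : V) : M)) ?_ hsum j
        intro i
        exact hEig i _ (f i - f' i).2
      funext j
      have h1 : ((f j - f' j : V) : M) = 0 := hXeInj j _ (hzero j)
      have h2 : f j - f' j = 0 := by
        exact_mod_cast h1
      exact sub_eq_zero.mp h2
    -- surjectivity
    set N : Submodule k M := ⨆ j : Fin s, Submodule.map (Xe ^ (j : ℕ)) V with hN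
    have hgen : ∀ (j : Fin s) (v : M), v ∈ V → HO.x ^ (j : ℕ) • v ∈ N := by
      intro j v hv
      exact le_iSup (fun j : Fin s => Submodule.map (Xe ^ (j : ℕ)) V) j
        ⟨v, hv, hXepow (j : ℕ) v⟩
    have hVleN : V ≤ N := by
      intro v hv
      have := hgen ⟨0, hs_pos⟩ v hv
      simpa using this
    have hNg : ∀ g : G, ∀ m ∈ N, HO.emb (MonoidAlgebra.of k G g) • m ∈ N := by
      intro g m hm
      refine Submodule.iSup_induction (motive := fun m => HO.emb (MonoidAlgebra.of k G g) • m ∈ N)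
        _ hm (fun j m' hm' => ?_) (by simpa using N.zero_mem)
        (fun m₁ m₂ h1 h2 => by simpa [smul_add] using N.add_mem h1 h2)
      obtain ⟨v, hv, rfl⟩ := hm'
      show HO.emb (MonoidAlgebra.of k G g) • ((Xe ^ (j : ℕ)) v) ∈ N
      rw [hXepow, g_xpow_smul HO g]
      exact N.smul_mem _ (hgen j _ (hVstab g v hv))
    have hNx : ∀ m ∈ N, HO.x • m ∈ N := by
      intro m hm
      refine Submodule.iSup_induction (motive := fun m => HO.x • m ∈ N)
        _ hm (fun j m' hm' => ?_) (by simpa using N.zero_mem)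
        (fun m₁ m₂ h1 h2 => by simpa [smul_add] using N.add_mem h1 h2)
      obtain ⟨v, hv, rfl⟩ := hm'
      show HO.x • ((Xe ^ (j : ℕ)) v) ∈ N
      rw [hXepow, ← mul_smul, ← pow_succ']
      by_cases hjs : (j : ℕ) + 1 < s
      · exact hgen ⟨(j : ℕ) + 1, hjs⟩ v hv
      · have hj1 : (j : ℕ) + 1 = s := by
          have := j.2
          omega
        rw [hj1, hXs]
        exact N.smul_mem β (hVleN hv)
    have hNtop : N = ⊤ := by
      rcases simple_aux HO M hM N hNg hNx with hb | ht
      · exact absurd (le_bot_iff.mp (hb ▸ hVleN)) hVne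
      · exact ht
    have hsurj : ∀ m : M, ∃ f : Fin s → V, ∑ j : Fin s, HO.x ^ (j : ℕ) • (V.subtype (f j)) = m := by
      intro m
      have hm : m ∈ N := by rw [hNtop]; trivial
      refine Submodule.iSup_induction
        (motive := fun m => ∃ f : Fin s → V, ∑ j : Fin s, HO.x ^ (j : ℕ) • (V.subtype (f j)) = m)
        _ hm (fun i m' hm' => ?_) ⟨0, by simp⟩ ?_
      · obtain ⟨v, hv, rfl⟩ := hm'
        show ∃ f : Fin s → V, ∑ j : Fin s, HO.x ^ (j : ℕ) • (V.subtype (f j)) = (Xe ^ (i : ℕ)) v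
        refine ⟨Pi.single i ⟨v, hv⟩, ?_⟩
        rw [Finset.sum_eq_single i (fun j _ hji => by rw [Pi.single_eq_of_ne hji]; simp)
          (fun h => absurd (Finset.mem_univ i) h)]
        rw [Pi.single_eq_same]
        exact (hXepow (i : ℕ) v).symm
      · rintro m₁ m₂ ⟨f₁, hf₁⟩ ⟨f₂, hf₂⟩
        refine ⟨f₁ + f₂, ?_⟩
        rw [← hf₁, ← hf₂, ← Finset.sum_add_distrib]
        exact Finset.sum_congr rfl (fun j _ => by rw [Pi.add_apply, map_add, smul_add])
    -- assemble the witness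
    refine ⟨hχfin, β, hβ0, ⟨?_⟩⟩
    exact
      { V := V
        ρ := ρV
        fin := inferInstance
        simple := hsimp
        e := V.subtype
        std :=
          { equivariant := fun g v => hρVapp g v
            ann := fun w => by
              rw [sub_smul, algebraMap_smul, hXs w, sub_self]
            xbasis := ⟨hinj, fun m => hsurj m⟩ } }

end HopfOrePaper
end

section
/- Assume kG is finite dimensional and semisimple. For any i ∈ I and t ≥ 1, the H-module V_t(i) is indecomposable and uniserial (its submodules form a chain), and its composition length is t; moreover its composition factors are V_{σ^l(i)} for l = 0, 1, …, t−1. -/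
open scoped TensorProduct

namespace HopfOrePaper

variable {k G H : Type} [Field k] [Group G] [Ring H] [Algebra k H] {χ : G →* kˣ}

section Aux

variable {k G H : Type} [Field k] [Group G] [Ring H] [Algebra k H] {χ : G →* kˣ}

/-- The image of a group element in `H`. -/
noncomputable def glem (HO : HopfOre k G H χ) (g : G) : H := HO.emb (MonoidAlgebra.of k G g)

lemma g_mul_x (HO : HopfOre k G H χ) (g : G) :
    glem HO g * HO.x = ((χ g : kˣ) : k) • (HO.x * glem HO g) := by
  rw [show HO.x * glem HO g = (((χ g)⁻¹ : kˣ) : k) • (glem HO g * HO.x) from HO.comm_rel g,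
    smul_smul]
  norm_cast
  rw [mul_inv_cancel]
  simp

lemma g_mul_xpow (HO : HopfOre k G H χ) (g : G) (i : ℕ) :
    glem HO g * HO.x ^ i = ((χ g ^ i : kˣ) : k) • (HO.x ^ i * glem HO g) := by
  induction i with
  | zero => simp
  | succ i ih =>
      rw [pow_succ, ← mul_assoc, ih, smul_mul_assoc, mul_assoc, g_mul_x, mul_smul_comm,
        smul_smul, ← mul_assoc, ← pow_succ]
      norm_cast
      rw [pow_succ (χ g) i]

variable (HO : HopfOre k G H χ)
variable {V : Type} [AddCommGroup V] [Module k V] (ρ : Representation k G V)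
variable {W : Type} [AddCommGroup W] [Module k W] [Module H W] [IsScalarTower k H W]
variable {t : ℕ} (e : V →ₗ[k] W)

lemma g_smul_beta (hW : IsStdQuot HO ρ e (HO.x ^ t) t) (g : G) (i : ℕ) (v : V) :
    glem HO g • (HO.x ^ i • e v) = ((χ g ^ i : kˣ) : k) • (HO.x ^ i • e (ρ g v)) := by
  rw [← mul_smul, g_mul_xpow, smul_assoc, mul_smul]
  congr 2
  exact (hW.equivariant g v).symm

lemma x_smul_beta (i : ℕ) (v : V) :
    HO.x • (HO.x ^ i • e v) = HO.x ^ (i + 1) • e v := by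
  rw [← mul_smul, ← pow_succ']

/-- The canonical linear map `(Fin t → V) → W`, `f ↦ ∑ xʲ e (f j)`. -/
def phiMap : (Fin t → V) →ₗ[k] W where
  toFun f := ∑ j : Fin t, HO.x ^ (j : ℕ) • e (f j)
  map_add' f g := by
    rw [← Finset.sum_add_distrib]
    simp [smul_add]
  map_smul' c f := by
    rw [Finset.smul_sum]
    simp [smul_comm c]

/-- The linear equivalence `(Fin t → V) ≃ W` from `xbasis`. -/
noncomputable def bEq (hW : IsStdQuot HO ρ e (HO.x ^ t) t) : (Fin t → V) ≃ₗ[k] W :=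
  LinearEquiv.ofBijective (phiMap HO e) hW.xbasis

lemma bEq_apply (hW : IsStdQuot HO ρ e (HO.x ^ t) t) (f : Fin t → V) :
    bEq HO ρ e hW f = ∑ j : Fin t, HO.x ^ (j : ℕ) • e (f j) := rfl

lemma bEq_single (hW : IsStdQuot HO ρ e (HO.x ^ t) t) (i : Fin t) (v : V) :
    bEq HO ρ e hW (Pi.single i v) = HO.x ^ (i : ℕ) • e v := by
  rw [bEq_apply, Finset.sum_eq_single i]
  · rw [Pi.single_eq_same]
  · intro j _ hj
    rw [Pi.single_eq_of_ne hj, map_zero, smul_zero]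
  · simp

/-- The `j`-th coordinate map `W → V`. -/
noncomputable def pii (hW : IsStdQuot HO ρ e (HO.x ^ t) t) (j : Fin t) : W →ₗ[k] V :=
  (LinearMap.proj j).comp ((bEq HO ρ e hW).symm : W →ₗ[k] (Fin t → V))

lemma pii_apply (hW : IsStdQuot HO ρ e (HO.x ^ t) t) (j : Fin t) (w : W) :
    pii HO ρ e hW j w = (bEq HO ρ e hW).symm w j := rfl

lemma pii_bEq (hW : IsStdQuot HO ρ e (HO.x ^ t) t) (j : Fin t) (f : Fin t → V) :
    pii HO ρ e hW j (bEq HO ρ e hW f) = f j := by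
  rw [pii_apply, LinearEquiv.symm_apply_apply]

lemma pii_beta (hW : IsStdQuot HO ρ e (HO.x ^ t) t) (i j : Fin t) (v : V) :
    pii HO ρ e hW j (HO.x ^ (i : ℕ) • e v) = (Pi.single i v : Fin t → V) j := by
  rw [← bEq_single HO ρ e hW, pii_bEq]

lemma eq_of_pii_eq (hW : IsStdQuot HO ρ e (HO.x ^ t) t) (w : W)
    (h : ∀ j : Fin t, pii HO ρ e hW j w = 0) : w = 0 := by
  have : (bEq HO ρ e hW).symm w = 0 := funext fun j => h j
  have := congrArg (bEq HO ρ e hW) this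
  rwa [LinearEquiv.apply_symm_apply, map_zero] at this

lemma g_smul_eq (hW : IsStdQuot HO ρ e (HO.x ^ t) t) (g : G) (w : W) :
    glem HO g • w
      = bEq HO ρ e hW (fun j => ((χ g ^ (j : ℕ) : kˣ) : k) • ρ g (pii HO ρ e hW j w)) := by
  conv_lhs => rw [← (bEq HO ρ e hW).apply_symm_apply w, bEq_apply, Finset.smul_sum]
  rw [bEq_apply]
  refine Finset.sum_congr rfl fun j _ => ?_
  rw [g_smul_beta HO ρ e hW, map_smul, smul_comm]
  rfl

lemma pii_g_smul (hW : IsStdQuot HO ρ e (HO.x ^ t) t) (g : G) (j : Fin t) (w : W) :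
    pii HO ρ e hW j (glem HO g • w)
      = ((χ g ^ (j : ℕ) : kˣ) : k) • ρ g (pii HO ρ e hW j w) := by
  rw [g_smul_eq HO ρ e hW, pii_bEq]

end Aux
section Aux2

variable {k G H : Type} [Field k] [Group G] [Ring H] [Algebra k H] {χ : G →* kˣ}
variable (HO : HopfOre k G H χ)
variable {V : Type} [AddCommGroup V] [Module k V] (ρ : Representation k G V)
variable {W : Type} [AddCommGroup W] [Module k W] [Module H W] [IsScalarTower k H W]
variable {t : ℕ} (e : V →ₗ[k] W)

/-- The shift of coordinates corresponding to multiplication by `x`. -/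
def shiftF (f : Fin t → V) : Fin t → V := fun j =>
  if h : 0 < (j : ℕ) then f ⟨(j : ℕ) - 1, by omega⟩ else 0

lemma x_smul_eq (hW : IsStdQuot HO ρ e (HO.x ^ t) t) (w : W) :
    HO.x • w = bEq HO ρ e hW (shiftF (fun j => pii HO ρ e hW j w)) := by
  rcases Nat.eq_zero_or_pos t with ht | ht
  · subst ht
    have hw : w = 0 := eq_of_pii_eq HO ρ e hW w (fun j => absurd j.isLt (by omega))
    rw [hw, smul_zero]
    rw [show (shiftF (fun j => pii HO ρ e hW j (0 : W))) = 0 from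
      funext fun j => absurd j.isLt (by omega), map_zero]
  obtain ⟨n, rfl⟩ : ∃ n, t = n + 1 := ⟨t - 1, by omega⟩
  set f : Fin (n+1) → V := fun j => pii HO ρ e hW j w with hf
  have hw : w = bEq HO ρ e hW f := by
    have : f = (bEq HO ρ e hW).symm w := funext fun j => rfl
    rw [this, (bEq HO ρ e hW).apply_symm_apply]
  set F : ℕ → W := fun i => if h : i < n + 1 then HO.x ^ (i+1) • e (f ⟨i, h⟩) else 0 with hF
  set Gn : ℕ → W := fun i => if h : i < n + 1 then HO.x ^ i • e (shiftF f ⟨i, h⟩) else 0 with hG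
  have hLHS : HO.x • w = ∑ i ∈ Finset.range (n+1), F i := by
    rw [hw, bEq_apply, Finset.smul_sum, ← Fin.sum_univ_eq_sum_range F (n+1)]
    refine Finset.sum_congr rfl fun j _ => ?_
    rw [x_smul_beta, hF]
    simp only [Fin.is_lt, dif_pos, Fin.eta]
  have hRHS : bEq HO ρ e hW (shiftF f) = ∑ i ∈ Finset.range (n+1), Gn i := by
    rw [bEq_apply, ← Fin.sum_univ_eq_sum_range Gn (n+1)]
    refine Finset.sum_congr rfl fun j _ => ?_
    rw [hG]
    simp only [Fin.is_lt, dif_pos, Fin.eta]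
  rw [hLHS, hRHS, Finset.sum_range_succ, Finset.sum_range_succ']
  have hFn : F n = 0 := by
    rw [hF]
    simp only [Nat.lt_succ_self, dif_pos]
    exact hW.ann _
  have hG0 : Gn 0 = 0 := by
    rw [hG]
    simp only [Nat.succ_pos, dif_pos]
    rw [shiftF]
    simp
  rw [hFn, hG0, add_zero, add_zero]
  refine Finset.sum_congr rfl fun i hi => ?_
  rw [Finset.mem_range] at hi
  rw [hF, hG]
  dsimp only
  rw [dif_pos (by omega : i + 1 < n + 1), dif_pos (by omega : i < n + 1)]
  congr 1

lemma pii_x_smul (hW : IsStdQuot HO ρ e (HO.x ^ t) t) (j : Fin t) (w : W) :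
    pii HO ρ e hW j (HO.x • w)
      = if h : 0 < (j : ℕ) then pii HO ρ e hW ⟨(j : ℕ) - 1, by omega⟩ w else 0 := by
  rw [x_smul_eq HO ρ e hW, pii_bEq, shiftF]

/-- The `k`-submodule of elements all of whose coordinates below `l` vanish. -/
def Uck (hW : IsStdQuot HO ρ e (HO.x ^ t) t) (l : ℕ) : Submodule k W where
  carrier := {w | ∀ j : Fin t, (j : ℕ) < l → pii HO ρ e hW j w = 0}
  zero_mem' := fun j _ => map_zero _
  add_mem' := fun {a b} ha hb j hj => by rw [map_add, ha j hj, hb j hj, add_zero]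
  smul_mem' := fun c w hw j hj => by rw [map_smul, hw j hj, smul_zero]

lemma Uck_g (hW : IsStdQuot HO ρ e (HO.x ^ t) t) (l : ℕ) :
    ∀ (g : G), ∀ w ∈ Uck HO ρ e hW l, glem HO g • w ∈ Uck HO ρ e hW l := by
  intro g w hw j hj
  rw [pii_g_smul, hw j hj, map_zero, smul_zero]

lemma Uck_x (hW : IsStdQuot HO ρ e (HO.x ^ t) t) (l : ℕ) :
    ∀ w ∈ Uck HO ρ e hW l, HO.x • w ∈ Uck HO ρ e hW (l + 1) := by
  intro w hw j hj
  rw [pii_x_smul HO ρ e hW]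
  split
  · next h => exact hw _ (show (j : ℕ) - 1 < l by omega)
  · rfl

lemma Uck_anti (hW : IsStdQuot HO ρ e (HO.x ^ t) t) {l l' : ℕ} (h : l ≤ l') :
    ∀ w ∈ Uck HO ρ e hW l', w ∈ Uck HO ρ e hW l :=
  fun _ hw j hj => hw j (lt_of_lt_of_le hj h)

lemma stab (S : Submodule k W) (hg : ∀ (g : G), ∀ w ∈ S, glem HO g • w ∈ S)
    (hx : ∀ w ∈ S, HO.x • w ∈ S) : ∀ (h : H), ∀ w ∈ S, h • w ∈ S := by
  have hxp : ∀ (i : ℕ), ∀ w ∈ S, HO.x ^ i • w ∈ S := by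
    intro i
    induction i with
    | zero => intro w hw; rwa [pow_zero, one_smul]
    | succ i ih => intro w hw; rw [pow_succ', mul_smul]; exact hx _ (ih w hw)
  let T : Submodule k H :=
    { carrier := {h : H | ∀ w ∈ S, h • w ∈ S}
      zero_mem' := fun w _ => by rw [zero_smul]; exact S.zero_mem
      add_mem' := fun {a b} ha hb w hw => by rw [add_smul]; exact S.add_mem (ha w hw) (hb w hw)
      smul_mem' := fun c h hh w hw => by rw [smul_assoc]; exact S.smul_mem c (hh w hw) }
  intro h
  have hle : (⊤ : Submodule k H) ≤ T := by
    rw [← HO.basis_span]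
    refine Submodule.span_le.mpr ?_
    rintro y ⟨p, rfl⟩
    intro w hw
    rw [mul_smul]
    exact hg p.1 _ (hxp p.2 w hw)
  exact hle trivial

/-- The `H`-submodule `xˡ•W` of `W`. -/
def Usub (hW : IsStdQuot HO ρ e (HO.x ^ t) t) (l : ℕ) : Submodule H W where
  carrier := Uck HO ρ e hW l
  add_mem' := fun {a b} ha hb => (Uck HO ρ e hW l).add_mem ha hb
  zero_mem' := (Uck HO ρ e hW l).zero_mem
  smul_mem' := fun h {w} hw =>
    stab HO (Uck HO ρ e hW l) (Uck_g HO ρ e hW l)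
      (fun w hw => Uck_anti HO ρ e hW (Nat.le_succ l) _ (Uck_x HO ρ e hW l w hw)) h w hw

lemma mem_Usub (hW : IsStdQuot HO ρ e (HO.x ^ t) t) {l : ℕ} {w : W} :
    w ∈ Usub HO ρ e hW l ↔ ∀ j : Fin t, (j : ℕ) < l → pii HO ρ e hW j w = 0 := Iff.rfl

end Aux2
section Aux3

variable {k G H : Type} [Field k] [Group G] [Ring H] [Algebra k H] {χ : G →* kˣ}
variable (HO : HopfOre k G H χ)
variable {V : Type} [AddCommGroup V] [Module k V] (ρ : Representation k G V)
variable {W : Type} [AddCommGroup W] [Module k W] [Module H W] [IsScalarTower k H W]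
variable {t : ℕ} (e : V →ₗ[k] W) (hW : IsStdQuot HO ρ e (HO.x ^ t) t)

lemma Usub_anti {l l' : ℕ} (h : l ≤ l') : Usub HO ρ e hW l' ≤ Usub HO ρ e hW l :=
  fun w hw => Uck_anti HO ρ e hW h w hw

lemma Usub_zero : Usub HO ρ e hW 0 = ⊤ :=
  eq_top_iff.mpr fun w _ j hj => absurd hj (by omega)

lemma Usub_bot {l : ℕ} (h : t ≤ l) : Usub HO ρ e hW l = ⊥ := by
  rw [eq_bot_iff]
  intro w hw
  have hw0 : w = 0 := eq_of_pii_eq HO ρ e hW w fun j => hw j (lt_of_lt_of_le j.isLt h)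
  simp [hw0]

lemma beta_mem {l : ℕ} {j : Fin t} (hj : l ≤ (j : ℕ)) (v : V) :
    HO.x ^ (j : ℕ) • e v ∈ Usub HO ρ e hW l := by
  intro j' hj'
  rw [pii_beta, Pi.single_eq_of_ne (show j' ≠ j from Fin.ne_of_val_ne (by omega))]

lemma pii_self (j : Fin t) (v : V) : pii HO ρ e hW j (HO.x ^ (j : ℕ) • e v) = v := by
  rw [pii_beta, Pi.single_eq_same]

lemma Usub_lt (hρ : IsSimpleRep ρ) {l : ℕ} (hl : l < t) :
    Usub HO ρ e hW (l + 1) < Usub HO ρ e hW l := by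
  haveI := hρ.1
  obtain ⟨v, hv⟩ := exists_ne (0 : V)
  refine lt_of_le_of_ne (Usub_anti HO ρ e hW (Nat.le_succ l)) fun hEq => ?_
  have h1 : HO.x ^ ((⟨l, hl⟩ : Fin t) : ℕ) • e v ∈ Usub HO ρ e hW l :=
    beta_mem HO ρ e hW (le_refl l) v
  rw [← hEq] at h1
  have h2 := h1 ⟨l, hl⟩ (Nat.lt_succ_self l)
  rw [pii_self] at h2
  exact hv h2

include hW in
lemma simple_gen (hρ : IsSimpleRep ρ) (N : Submodule H W) (j : Fin t) {v : V}
    (hv : v ≠ 0) (hm : HO.x ^ (j : ℕ) • e v ∈ N) (v' : V) :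
    HO.x ^ (j : ℕ) • e v' ∈ N := by
  have hksmul : ∀ (c : k), ∀ w ∈ N, c • w ∈ N := fun c w hw => by
    rw [← algebraMap_smul H c w]; exact N.smul_mem _ hw
  let S : Submodule k V :=
    { carrier := {u : V | HO.x ^ (j : ℕ) • e u ∈ N}
      zero_mem' := by
        show HO.x ^ (j : ℕ) • e 0 ∈ N
        rw [map_zero, smul_zero]; exact N.zero_mem
      add_mem' := fun {a b} ha hb => by
        show HO.x ^ (j : ℕ) • e (a + b) ∈ N
        rw [map_add, smul_add]; exact N.add_mem ha hb
      smul_mem' := fun c u hu => by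
        show HO.x ^ (j : ℕ) • e (c • u) ∈ N
        rw [map_smul, smul_comm]
        exact hksmul c _ hu }
  have hstable : ∀ g : G, ∀ u ∈ S, ρ g u ∈ S := by
    intro g u hu
    show HO.x ^ (j : ℕ) • e (ρ g u) ∈ N
    have h1 : glem HO g • (HO.x ^ (j : ℕ) • e u) ∈ N := N.smul_mem _ hu
    rw [g_smul_beta HO ρ e hW] at h1
    have h2 := hksmul (((χ g ^ (j : ℕ))⁻¹ : kˣ) : k) _ h1
    rwa [smul_smul, ← Units.val_mul, inv_mul_cancel, Units.val_one, one_smul] at h2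
  rcases hρ.2 S hstable with hS | hS
  · have hvS : v ∈ S := hm
    rw [hS] at hvS
    exact absurd ((Submodule.mem_bot k).mp hvS) hv
  · have : v' ∈ S := hS ▸ Submodule.mem_top
    exact this

lemma sub_beta_mem (j : Fin t) {u : W} (hu : u ∈ Usub HO ρ e hW (j : ℕ)) :
    u - HO.x ^ (j : ℕ) • e (pii HO ρ e hW j u) ∈ Usub HO ρ e hW ((j : ℕ) + 1) := by
  intro j' hj'
  rw [map_sub, pii_beta HO ρ e hW j j']
  rcases Nat.lt_or_ge (j' : ℕ) (j : ℕ) with h2 | h2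
  · rw [hu j' h2, Pi.single_eq_of_ne (Fin.ne_of_val_ne (by omega)), sub_zero]
  · have hje : j' = j := Fin.ext (by omega)
    subst hje
    rw [Pi.single_eq_same, sub_self]

lemma gen_from (hρ : IsSimpleRep ρ) :
    ∀ (d l : ℕ), l + d = t → ∀ N : Submodule H W, N ≤ Usub HO ρ e hW l →
      (∃ w ∈ N, ∃ hl : l < t, pii HO ρ e hW ⟨l, hl⟩ w ≠ 0) → Usub HO ρ e hW l ≤ N := by
  intro d
  induction d with
  | zero =>
      rintro l hlt N _ ⟨w, _, hl, _⟩
      omega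
  | succ d ih =>
      rintro l hlt N hNle ⟨w, hwN, hl, hvne⟩
      have hsucc : Usub HO ρ e hW (l + 1) ≤ N := by
        rcases Nat.lt_or_ge (l + 1) t with h1 | h1
        · refine le_trans
            (ih (l + 1) (by omega) (N ⊓ Usub HO ρ e hW (l + 1)) inf_le_right ?_) inf_le_left
          refine ⟨HO.x • w, ⟨N.smul_mem _ hwN, Uck_x HO ρ e hW l w (hNle hwN)⟩, h1, ?_⟩
          rw [pii_x_smul HO ρ e hW, dif_pos (show 0 < ((⟨l + 1, h1⟩ : Fin t) : ℕ) from Nat.succ_pos l)]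
          exact hvne
        · rw [Usub_bot HO ρ e hW h1]; exact bot_le
      have hβ : HO.x ^ ((⟨l, hl⟩ : Fin t) : ℕ) • e (pii HO ρ e hW ⟨l, hl⟩ w) ∈ N := by
        have h3 := N.sub_mem hwN (hsucc (sub_beta_mem HO ρ e hW ⟨l, hl⟩ (hNle hwN)))
        rwa [sub_sub_cancel] at h3
      intro u hu
      have h2 := hsucc (sub_beta_mem HO ρ e hW ⟨l, hl⟩ hu)
      have h3 := simple_gen HO ρ e hW hρ N ⟨l, hl⟩ hvne hβ (pii HO ρ e hW ⟨l, hl⟩ u)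
      have h4 := N.add_mem h2 h3
      rwa [sub_add_cancel] at h4

lemma classify (hρ : IsSimpleRep ρ) (N : Submodule H W) :
    ∃ l, l ≤ t ∧ N = Usub HO ρ e hW l := by
  classical
  rcases eq_or_ne N ⊥ with rfl | hN
  · exact ⟨t, le_refl t, (Usub_bot HO ρ e hW (le_refl t)).symm⟩
  obtain ⟨w, hwN, hw0⟩ := (Submodule.ne_bot_iff N).mp hN
  have hex : ∃ l : ℕ, ∃ w ∈ N, ∃ hl : l < t, pii HO ρ e hW ⟨l, hl⟩ w ≠ 0 := by
    by_contra hc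
    push_neg at hc
    refine hw0 (eq_of_pii_eq HO ρ e hW w fun j => ?_)
    have := hc (j : ℕ) w hwN j.isLt
    simpa using this
  obtain ⟨w', hw'N, hl, hne⟩ := Nat.find_spec hex
  have hle : N ≤ Usub HO ρ e hW (Nat.find hex) := by
    intro u hu j hj
    by_contra hne'
    exact Nat.find_min hex hj ⟨u, hu, j.isLt, by simpa using hne'⟩
  exact ⟨Nat.find hex, by omega, le_antisymm hle
    (gen_from HO ρ e hW hρ (t - Nat.find hex) (Nat.find hex) (by omega) N hle
      ⟨w', hw'N, hl, hne⟩)⟩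

end Aux3
section Aux4

variable {k G H : Type} [Field k] [Group G] [Ring H] [Algebra k H] {χ : G →* kˣ}
variable (HO : HopfOre k G H χ)
variable {V : Type} [AddCommGroup V] [Module k V] (ρ : Representation k G V)
variable {W : Type} [AddCommGroup W] [Module k W] [Module H W] [IsScalarTower k H W]
variable {t : ℕ} (e : V →ₗ[k] W) (hW : IsStdQuot HO ρ e (HO.x ^ t) t)

lemma Usub_covby (hρ : IsSimpleRep ρ) {l : ℕ} (hl : l < t) :
    Usub HO ρ e hW (l + 1) ⋖ Usub HO ρ e hW l := by
  refine ⟨Usub_lt HO ρ e hW hρ hl, ?_⟩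
  intro N h1 h2
  obtain ⟨l', _, rfl⟩ := classify HO ρ e hW hρ N
  have hA : l' ≤ l := by
    by_contra hc
    exact absurd (Usub_anti HO ρ e hW (show l + 1 ≤ l' by omega)) (not_le_of_gt h1)
  exact absurd (Usub_anti HO ρ e hW hA) (not_le_of_gt h2)

lemma factor_x (l : ℕ) (p q : Submodule H W) (hp : p = Usub HO ρ e hW (l + 1))
    (hq : q = Usub HO ρ e hW l) (z : sectionQuot p q) : HO.x • z = 0 := by
  obtain ⟨u, rfl⟩ := Submodule.Quotient.mk_surjective _ z
  rw [← Submodule.Quotient.mk_smul, Submodule.Quotient.mk_eq_zero, Submodule.mem_comap]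
  show ((HO.x • u : ↥q) : W) ∈ p
  rw [hp]
  have huq : (u : W) ∈ Usub HO ρ e hW l := by rw [← hq]; exact u.2
  exact Uck_x HO ρ e hW l (u : W) huq

lemma factor_iso (hρ : IsSimpleRep ρ) (j : Fin t) (p q : Submodule H W)
    (hp : p = Usub HO ρ e hW ((j : ℕ) + 1)) (hq : q = Usub HO ρ e hW (j : ℕ)) :
    ∃ f : V ≃ₗ[k] sectionQuot p q,
      ∀ (g : G) (v : V),
        resRep HO (sectionQuot p q) g (f v)
          = ((χ g ^ (j : ℕ) : kˣ) : k) • f (ρ g v) := by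
  have hmemq : ∀ v : V, HO.x ^ (j : ℕ) • e v ∈ q := fun v =>
    hq ▸ beta_mem HO ρ e hW (le_refl _) v
  let f0 : V →ₗ[k] sectionQuot p q :=
    { toFun := fun v => Submodule.Quotient.mk ⟨HO.x ^ (j : ℕ) • e v, hmemq v⟩
      map_add' := fun a b => by
        have hsub : (⟨HO.x ^ (j : ℕ) • e (a + b), hmemq (a + b)⟩ : ↥q)
            = ⟨HO.x ^ (j : ℕ) • e a, hmemq a⟩ + ⟨HO.x ^ (j : ℕ) • e b, hmemq b⟩ :=
          Subtype.ext (by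
            show HO.x ^ (j : ℕ) • e (a + b)
              = HO.x ^ (j : ℕ) • e a + HO.x ^ (j : ℕ) • e b
            rw [map_add, smul_add])
        rw [hsub, Submodule.Quotient.mk_add]
      map_smul' := fun c a => by
        have hsub : (⟨HO.x ^ (j : ℕ) • e (c • a), hmemq (c • a)⟩ : ↥q)
            = c • (⟨HO.x ^ (j : ℕ) • e a, hmemq a⟩ : ↥q) :=
          Subtype.ext (by
            show HO.x ^ (j : ℕ) • e (c • a) = c • (HO.x ^ (j : ℕ) • e a)
            rw [map_smul, smul_comm])
        rw [hsub, Submodule.Quotient.mk_smul]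
        rfl }
  have hinj : Function.Injective f0 := by
    intro a b hab
    have h0 : f0 (a - b) = 0 := by rw [map_sub, hab, sub_self]
    have hmem : HO.x ^ (j : ℕ) • e (a - b) ∈ Usub HO ρ e hW ((j : ℕ) + 1) := by
      have h1 := (Submodule.Quotient.mk_eq_zero _).mp h0
      rw [Submodule.mem_comap] at h1
      exact hp ▸ h1
    have h2 := hmem j (Nat.lt_succ_self _)
    rw [pii_self] at h2
    exact sub_eq_zero.mp h2
  have hsurj : Function.Surjective f0 := by
    intro z
    obtain ⟨u, rfl⟩ := Submodule.Quotient.mk_surjective _ z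
    refine ⟨pii HO ρ e hW j (u : W), ?_⟩
    show Submodule.Quotient.mk ⟨HO.x ^ (j : ℕ) • e (pii HO ρ e hW j (u : W)), hmemq _⟩
      = Submodule.Quotient.mk u
    rw [Submodule.Quotient.eq, Submodule.mem_comap]
    show ((⟨HO.x ^ (j : ℕ) • e (pii HO ρ e hW j (u : W)), hmemq _⟩ - u : ↥q) : W) ∈ p
    rw [hp]
    have huq : (u : W) ∈ Usub HO ρ e hW (j : ℕ) := by rw [← hq]; exact u.2
    have hmem2 := (Usub HO ρ e hW ((j : ℕ) + 1)).neg_mem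
      (sub_beta_mem HO ρ e hW j huq)
    rwa [neg_sub] at hmem2
  refine ⟨LinearEquiv.ofBijective f0 ⟨hinj, hsurj⟩, ?_⟩
  intro g v
  show glem HO g • Submodule.Quotient.mk (p := Submodule.comap q.subtype p)
      ⟨HO.x ^ (j : ℕ) • e v, hmemq v⟩
    = ((χ g ^ (j : ℕ) : kˣ) : k) • Submodule.Quotient.mk ⟨HO.x ^ (j : ℕ) • e (ρ g v), hmemq (ρ g v)⟩
  rw [← Submodule.Quotient.mk_smul]
  have hsm : (glem HO g • (⟨HO.x ^ (j : ℕ) • e v, hmemq v⟩ : ↥q))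
      = ((χ g ^ (j : ℕ) : kˣ) : k) • (⟨HO.x ^ (j : ℕ) • e (ρ g v), hmemq (ρ g v)⟩ : ↥q) := by
    apply Subtype.ext
    show glem HO g • (HO.x ^ (j : ℕ) • e v) = _
    rw [g_smul_beta HO ρ e hW]
    rfl
  rw [hsm, Submodule.Quotient.mk_smul]

end Aux4
/-- **Proposition 4.3.** Assume `kG` is finite-dimensional and semisimple.  For a
simple `kG`-module `V_i` and `t ≥ 1`, the `H`-module `V_t(i) = M(V_i)/x^tM(V_i)` is
indecomposable and uniserial, its composition length is `t`, and its composition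
factors are `V_{σ^l(i)}`, `l = 0, 1, …, t-1` (from top to bottom). -/
theorem stmt_6 {k G H : Type} [Field k] [IsAlgClosed k] [Group G] [Finite G]
    [Ring H] [Algebra k H]
    {χ : G →* kˣ} (a : G) (ha : a ∈ Subgroup.center G) (hχa : χ a ≠ 1)
    (hss : IsSemisimpleRing (MonoidAlgebra k G))
    (s : ℕ) (hχord : orderOf χ = s) (hq1 : 1 < orderOf (χ a)) (hqs : orderOf (χ a) ≤ s)
    (HO : HopfOre k G H χ)
    {V : Type} [AddCommGroup V] [Module k V] [FiniteDimensional k V]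
    (ρ : Representation k G V) (hρ : IsSimpleRep ρ)
    {W : Type} [AddCommGroup W] [Module k W] [Module H W] [IsScalarTower k H W]
    (t : ℕ) (ht : 0 < t) (e : V →ₗ[k] W) (hW : IsStdQuot HO ρ e (HO.x ^ t) t) :
    IsIndecomposableMod H W ∧ IsUniserial H W ∧
    ∃ cs : CompositionSeries (Submodule H W),
      cs.length = t ∧ cs 0 = ⊥ ∧ cs (Fin.last cs.length) = ⊤ ∧
      ∀ j : Fin cs.length,
        (∀ z : sectionQuot (cs j.castSucc) (cs j.succ), HO.x • z = 0) ∧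
        IsTwistIso χ ((t : ℤ) - 1 - (j : ℤ)) ρ
          (resRep HO (sectionQuot (cs j.castSucc) (cs j.succ))) := by
  haveI hV : Nontrivial V := hρ.1
  haveI : Nonempty (Fin t) := ⟨⟨0, ht⟩⟩
  have hW_nontriv : Nontrivial W := by
    obtain ⟨v, hv⟩ := exists_ne (0 : V)
    refine nontrivial_of_ne (bEq HO ρ e hW (Pi.single ⟨0, ht⟩ v)) 0 fun hEq => ?_
    have h0 : (Pi.single (⟨0, ht⟩ : Fin t) v : Fin t → V) = 0 := by
      apply (bEq HO ρ e hW).injective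
      rw [hEq, map_zero]
    have := congrFun h0 ⟨0, ht⟩
    rw [Pi.single_eq_same] at this
    exact hv this
  have huni : IsUniserial H W := by
    intro p q
    obtain ⟨l, _, rfl⟩ := classify HO ρ e hW hρ p
    obtain ⟨l', _, rfl⟩ := classify HO ρ e hW hρ q
    rcases le_total l l' with h | h
    · exact Or.inr (Usub_anti HO ρ e hW h)
    · exact Or.inl (Usub_anti HO ρ e hW h)
  have hind : IsIndecomposableMod H W := by
    refine ⟨hW_nontriv, fun p q hc => ?_⟩
    rcases huni p q with h | h
    · exact Or.inl (le_bot_iff.mp ((le_inf le_rfl h).trans hc.inf_eq_bot.le))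
    · exact Or.inr (le_bot_iff.mp ((le_inf h le_rfl).trans hc.inf_eq_bot.le))
  refine ⟨hind, huni, ?_⟩
  let cs : CompositionSeries (Submodule H W) :=
    { length := t
      toFun := fun i => Usub HO ρ e hW (t - (i : ℕ))
      step := fun i => by
        have hit : (i : ℕ) < t := i.isLt
        show Usub HO ρ e hW (t - ((Fin.castSucc i) : ℕ))
          ⋖ Usub HO ρ e hW (t - ((Fin.succ i) : ℕ))
        have h1 : t - ((Fin.castSucc i) : ℕ) = (t - ((Fin.succ i) : ℕ)) + 1 := by
          simp only [Fin.coe_castSucc, Fin.val_succ]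
          omega
        rw [h1]
        exact Usub_covby HO ρ e hW hρ (by simp only [Fin.val_succ]; omega) }
  refine ⟨cs, rfl, ?_, ?_, ?_⟩
  · show Usub HO ρ e hW (t - ((0 : Fin (t + 1)) : ℕ)) = ⊥
    rw [show t - ((0 : Fin (t + 1)) : ℕ) = t by simp]
    exact Usub_bot HO ρ e hW le_rfl
  · show Usub HO ρ e hW (t - ((Fin.last t) : ℕ)) = ⊤
    rw [show t - ((Fin.last t) : ℕ) = 0 by simp]
    exact Usub_zero HO ρ e hW
  · intro j
    have hjt : (j : ℕ) < t := j.isLt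
    have hjjlt : t - 1 - (j : ℕ) < t := by omega
    set jj : Fin t := ⟨t - 1 - (j : ℕ), hjjlt⟩ with hjjdef
    have hp : cs j.castSucc = Usub HO ρ e hW ((jj : ℕ) + 1) := by
      show Usub HO ρ e hW (t - ((Fin.castSucc j) : ℕ)) = _
      congr 1
      show t - (j : ℕ) = (t - 1 - (j : ℕ)) + 1
      omega
    have hq : cs j.succ = Usub HO ρ e hW (jj : ℕ) := by
      show Usub HO ρ e hW (t - ((Fin.succ j) : ℕ)) = _
      congr 1
      show t - ((j : ℕ) + 1) = t - 1 - (j : ℕ)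
      omega
    constructor
    · exact fun z => factor_x HO ρ e hW (jj : ℕ) _ _ hp hq z
    · obtain ⟨f, hf⟩ := factor_iso HO ρ e hW hρ jj _ _ hp hq
      refine ⟨f, fun g v => ?_⟩
      rw [hf g v]
      have hz : ((t : ℤ) - 1 - (j : ℤ)) = ((jj : ℕ) : ℤ) := by
        show _ = ((t - 1 - (j : ℕ) : ℕ) : ℤ)
        omega
      rw [hz, zpow_natCast]

end HopfOrePaper
end

section
/- Assume kG is finite dimensional and semisimple. Let i, j ∈ I and n, t ≥ 1. Then V_t(i) ≅ V_n(j) as H-modules if and only if t = n and i = j. -/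
open scoped TensorProduct

namespace HopfOrePaper

variable {k G H : Type} [Field k] [Group G] [Ring H] [Algebra k H] {χ : G →* kˣ}

section Aux44

variable {k G H : Type} [Field k] [Group G] [Ring H] [Algebra k H] {χ : G →* kˣ}

lemma aux_gx (HO : HopfOre k G H χ) (g : G) : ∀ j : ℕ,
    HO.emb (MonoidAlgebra.of k G g) * HO.x ^ j
      = ((χ g ^ j : kˣ) : k) • (HO.x ^ j * HO.emb (MonoidAlgebra.of k G g))
  | 0 => by simp
  | j + 1 => by
    have h1 : HO.emb (MonoidAlgebra.of k G g) * HO.x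
        = ((χ g : kˣ) : k) • (HO.x * HO.emb (MonoidAlgebra.of k G g)) := by
      rw [HO.comm_rel g, smul_smul, ← Units.val_mul, mul_inv_cancel, Units.val_one, one_smul]
    calc HO.emb (MonoidAlgebra.of k G g) * HO.x ^ (j + 1)
        = (HO.emb (MonoidAlgebra.of k G g) * HO.x ^ j) * HO.x := by
          rw [pow_succ, mul_assoc]
      _ = ((χ g ^ j : kˣ) : k) •
            (HO.x ^ j * (HO.emb (MonoidAlgebra.of k G g) * HO.x)) := by
          rw [aux_gx HO g j, smul_mul_assoc, mul_assoc]
      _ = ((χ g ^ j : kˣ) : k) • (((χ g : kˣ) : k) •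
            (HO.x ^ j * (HO.x * HO.emb (MonoidAlgebra.of k G g)))) := by
          rw [h1, mul_smul_comm]
      _ = ((χ g ^ (j + 1) : kˣ) : k) •
            (HO.x ^ (j + 1) * HO.emb (MonoidAlgebra.of k G g)) := by
          rw [smul_smul, ← Units.val_mul, ← pow_succ, ← mul_assoc, ← pow_succ]

variable {V W : Type} [AddCommGroup V] [Module k V]
  [AddCommGroup W] [Module k W] [Module H W] [IsScalarTower k H W]

/-- The `k`-linear map `(Fin d → V) → W`, `f ↦ ∑ xʲ • e (f j)`. -/
noncomputable def sumMap (HO : HopfOre k G H χ) (e : V →ₗ[k] W) (d : ℕ) :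
    (Fin d → V) →ₗ[k] W where
  toFun f := ∑ j : Fin d, HO.x ^ (j : ℕ) • e (f j)
  map_add' f g := by
    simp only [Pi.add_apply, map_add, smul_add]
    exact Finset.sum_add_distrib
  map_smul' c f := by
    simp only [Pi.smul_apply, map_smul, RingHom.id_apply, Finset.smul_sum]
    exact Finset.sum_congr rfl fun j _ => smul_comm _ _ _

lemma sumMap_apply (HO : HopfOre k G H χ) (e : V →ₗ[k] W) (d : ℕ) (f : Fin d → V) :
    sumMap HO e d f = ∑ j : Fin d, HO.x ^ (j : ℕ) • e (f j) := rfl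

lemma g_smul_sumMap (HO : HopfOre k G H χ) {ρ : Representation k G V} {e : V →ₗ[k] W}
    {c : H} {d : ℕ} (hW : IsStdQuot HO ρ e c d) (g : G) (u : Fin d → V) :
    HO.emb (MonoidAlgebra.of k G g) • sumMap HO e d u
      = sumMap HO e d (fun j => ((χ g ^ (j : ℕ) : kˣ) : k) • ρ g (u j)) := by
  rw [sumMap_apply, sumMap_apply, Finset.smul_sum]
  refine Finset.sum_congr rfl fun j _ => ?_
  rw [← mul_smul, aux_gx, smul_assoc, mul_smul, ← hW.equivariant, map_smul, smul_comm]

/-- the shift `f ↦ (0, f 0, f 1, …)`. -/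
def shiftFun {V : Type} [Zero V] {m : ℕ} (u : Fin (m + 1) → V) : Fin (m + 1) → V :=
  Fin.cases 0 fun j => u j.castSucc

lemma x_smul_sumMap (HO : HopfOre k G H χ) {ρ : Representation k G V} {e : V →ₗ[k] W}
    {m : ℕ} (hW : IsStdQuot HO ρ e (HO.x ^ (m + 1)) (m + 1)) (u : Fin (m + 1) → V) :
    HO.x • sumMap HO e (m + 1) u = sumMap HO e (m + 1) (shiftFun u) := by
  rw [sumMap_apply, sumMap_apply, Finset.smul_sum, Fin.sum_univ_castSucc, Fin.sum_univ_succ]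
  simp only [shiftFun, Fin.cases_zero, Fin.cases_succ, map_zero, smul_zero, zero_add,
    Fin.coe_castSucc, Fin.val_succ, Fin.val_last, ← mul_smul, ← pow_succ']
  rw [hW.ann, add_zero]

lemma sumMap_pin (HO : HopfOre k G H χ) (e : V →ₗ[k] W) (m : ℕ) (v : V) :
    sumMap HO e (m + 1) (Fin.cases v fun _ => 0) = e v := by
  rw [sumMap_apply, Fin.sum_univ_succ]
  simp

lemma sumMap_single_last (HO : HopfOre k G H χ) (e : V →ₗ[k] W) (m : ℕ) (v : V) :
    sumMap HO e (m + 1) (fun j => if j = Fin.last m then v else 0)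
      = HO.x ^ m • e v := by
  rw [sumMap_apply, Fin.sum_univ_castSucc]
  have h : ∀ j : Fin m, j.castSucc ≠ Fin.last m := fun j => (Fin.castSucc_lt_last j).ne
  simp [h, Fin.val_last]

lemma exists_shiftFun_eq {V : Type} [Zero V] {m : ℕ} (u : Fin (m + 1) → V)
    (h0 : u 0 = 0) : ∃ w : Fin (m + 1) → V, shiftFun w = u := by
  refine ⟨fun j => if hj : (j : ℕ) < m then u (Fin.succ ⟨j, hj⟩) else 0, ?_⟩
  funext j
  induction j using Fin.cases with
  | zero => simp [shiftFun, h0]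
  | succ i =>
    simp only [shiftFun, Fin.cases_succ]
    rw [dif_pos (show ((i.castSucc : Fin (m + 1)) : ℕ) < m from i.isLt)]
    exact congrArg u (congrArg Fin.succ (Fin.ext rfl))

end Aux44

/-- **Corollary 4.4.** Assume `kG` is finite-dimensional and semisimple.  Then
`V_t(i) ≅ V_n(j)` as `H`-modules if and only if `t = n` and `i = j`. -/
theorem stmt_7 {k G H : Type} [Field k] [IsAlgClosed k] [Group G] [Finite G]
    [Ring H] [Algebra k H]
    {χ : G →* kˣ} (a : G) (ha : a ∈ Subgroup.center G) (hχa : χ a ≠ 1)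
    (hss : IsSemisimpleRing (MonoidAlgebra k G))
    (HO : HopfOre k G H χ)
    {V V' : Type} [AddCommGroup V] [Module k V] [FiniteDimensional k V]
    [AddCommGroup V'] [Module k V'] [FiniteDimensional k V']
    (ρ : Representation k G V) (hρ : IsSimpleRep ρ)
    (ρ' : Representation k G V') (hρ' : IsSimpleRep ρ')
    {W W' : Type} [AddCommGroup W] [Module k W] [Module H W] [IsScalarTower k H W]
    [AddCommGroup W'] [Module k W'] [Module H W'] [IsScalarTower k H W']
    (t n : ℕ) (ht : 0 < t) (hn : 0 < n)
    (e : V →ₗ[k] W) (hW : IsStdQuot HO ρ e (HO.x ^ t) t)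
    (e' : V' →ₗ[k] W') (hW' : IsStdQuot HO ρ' e' (HO.x ^ n) n) :
    Nonempty (W ≃ₗ[H] W') ↔ (t = n ∧ RepIso ρ ρ') := by
  obtain ⟨m, rfl⟩ : ∃ m, t = m + 1 := ⟨t - 1, by omega⟩
  obtain ⟨m', rfl⟩ : ∃ m', n = m' + 1 := ⟨n - 1, by omega⟩
  clear ht hn
  haveI : Nontrivial V := hρ.1
  haveI : Nontrivial V' := hρ'.1
  obtain ⟨v0, hv0⟩ := exists_ne (0 : V)
  obtain ⟨v0', hv0'⟩ := exists_ne (0 : V')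
  constructor
  · rintro ⟨f⟩
    have hfk : ∀ (c : k) (w : W), f (c • w) = c • f w := fun c w => by
      rw [← algebraMap_smul H c w, map_smul, algebraMap_smul]
    -- `x^{m'+1}` annihilates `W`, `x^{m+1}` annihilates `W'`
    have hkillW : ∀ w : W, HO.x ^ (m' + 1) • w = 0 := fun w => by
      have h := hW'.ann (f w)
      rw [← map_smul] at h
      exact f.injective (by rw [h, map_zero])
    have hkillW' : ∀ w : W', HO.x ^ (m + 1) • w = 0 := fun w => by
      have h := hW.ann (f.symm w)
      rw [← map_smul] at h
      exact f.symm.injective (by rw [h, map_zero])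
    have hne : HO.x ^ m • e v0 ≠ 0 := by
      intro h
      have h2 : sumMap HO e (m + 1) (fun j => if j = Fin.last m then v0 else 0)
          = sumMap HO e (m + 1) 0 := by
        rw [sumMap_single_last, h, map_zero]
      have h3 := hW.xbasis.injective h2
      have h4 := congrFun h3 (Fin.last m)
      simp only [if_pos rfl, Pi.zero_apply] at h4
      exact hv0 h4
    have hne' : HO.x ^ m' • e' v0' ≠ 0 := by
      intro h
      have h2 : sumMap HO e' (m' + 1) (fun j => if j = Fin.last m' then v0' else 0)
          = sumMap HO e' (m' + 1) 0 := by
        rw [sumMap_single_last, h, map_zero]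
      have h3 := hW'.xbasis.injective h2
      have h4 := congrFun h3 (Fin.last m')
      simp only [if_pos rfl, Pi.zero_apply] at h4
      exact hv0' h4
    have hle : m ≤ m' := by
      by_contra hlt
      push_neg at hlt
      refine hne ?_
      have hx : HO.x ^ m = HO.x ^ (m - (m' + 1)) * HO.x ^ (m' + 1) := by
        rw [← pow_add]; congr 1; omega
      rw [hx, mul_smul, hkillW, smul_zero]
    have hge : m' ≤ m := by
      by_contra hlt
      push_neg at hlt
      refine hne' ?_
      have hx : HO.x ^ m' = HO.x ^ (m' - (m + 1)) * HO.x ^ (m + 1) := by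
        rw [← pow_add]; congr 1; omega
      rw [hx, mul_smul, hkillW', smul_zero]
    obtain rfl : m = m' := le_antisymm hle hge
    refine ⟨rfl, ?_⟩
    -- the `kG`-isomorphism `V ≅ V'`
    have hE : Function.Bijective (sumMap HO e (m + 1)) := hW.xbasis
    have hE' : Function.Bijective (sumMap HO e' (m + 1)) := hW'.xbasis
    let E : (Fin (m + 1) → V) ≃ₗ[k] W := LinearEquiv.ofBijective _ hE
    let E' : (Fin (m + 1) → V') ≃ₗ[k] W' := LinearEquiv.ofBijective _ hE'
    have hEapp : ∀ u, E u = sumMap HO e (m + 1) u := fun _ => rfl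
    have hE'app : ∀ u, E' u = sumMap HO e' (m + 1) u := fun _ => rfl
    have hEsymm : ∀ u, E.symm (sumMap HO e (m + 1) u) = u := fun u => by
      rw [← hEapp, E.symm_apply_apply]
    have hE'symm : ∀ u, E'.symm (sumMap HO e' (m + 1) u) = u := fun u => by
      rw [← hE'app, E'.symm_apply_apply]
    let Φfun : V → V' := fun v => E'.symm (f (e v)) 0
    have key : ∀ (g : G) (v : V),
        E'.symm (f (e (ρ g v)))
          = fun j : Fin (m + 1) =>
              ((χ g ^ (j : ℕ) : kˣ) : k) • ρ' g (E'.symm (f (e v)) j) := by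
      intro g v
      have h1 : f (e (ρ g v)) = HO.emb (MonoidAlgebra.of k G g) • f (e v) := by
        rw [hW.equivariant, map_smul]
      have h2 : HO.emb (MonoidAlgebra.of k G g) • f (e v)
          = sumMap HO e' (m + 1)
              (fun j : Fin (m + 1) =>
                ((χ g ^ (j : ℕ) : kˣ) : k) • ρ' g (E'.symm (f (e v)) j)) := by
        conv_lhs => rw [show f (e v) = sumMap HO e' (m + 1) (E'.symm (f (e v))) from
          (E'.apply_symm_apply _).symm]
        exact g_smul_sumMap HO hW' g _
      rw [h1, h2, hE'symm]
    have Φequiv : ∀ (g : G) (v : V), Φfun (ρ g v) = ρ' g (Φfun v) := by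
      intro g v
      have h := congrFun (key g v) 0
      simpa [Φfun] using h
    have Φzero : ∀ v : V, Φfun v = 0 → v = 0 := by
      intro v hv
      obtain ⟨w1, hw1⟩ := exists_shiftFun_eq (E'.symm (f (e v))) hv
      have hfe : f (e v) = HO.x • sumMap HO e' (m + 1) w1 := by
        rw [x_smul_sumMap HO hW' w1, hw1]
        exact (E'.apply_symm_apply _).symm
      have hev : e v = HO.x • f.symm (sumMap HO e' (m + 1) w1) := by
        apply f.injective
        rw [map_smul, f.apply_symm_apply, hfe]
      have h3 : e v = sumMap HO e (m + 1)
          (shiftFun (E.symm (f.symm (sumMap HO e' (m + 1) w1)))) := by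
        rw [← x_smul_sumMap HO hW, hev]
        congr 1
        exact (E.apply_symm_apply _).symm
      have h4 : sumMap HO e (m + 1) (Fin.cases v fun _ => 0)
          = sumMap HO e (m + 1)
              (shiftFun (E.symm (f.symm (sumMap HO e' (m + 1) w1)))) := by
        rw [sumMap_pin]; exact h3
      have h5 := congrFun (hE.injective h4) 0
      simpa [shiftFun] using h5
    let Φ : V →ₗ[k] V' :=
      { toFun := Φfun
        map_add' := fun v w => by simp only [Φfun, map_add, Pi.add_apply]
        map_smul' := fun c v => by
          simp only [Φfun, map_smul, hfk, RingHom.id_apply, Pi.smul_apply] }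
    have Φinj : Function.Injective Φ := (injective_iff_map_eq_zero Φ).mpr Φzero
    have Φsurj : Function.Surjective Φ := by
      have hrange : ∀ g : G, ∀ w ∈ LinearMap.range Φ, ρ' g w ∈ LinearMap.range Φ := by
        rintro g _ ⟨v, rfl⟩
        exact ⟨ρ g v, Φequiv g v⟩
      rcases hρ'.2 _ hrange with hbot | htop
      · exfalso
        have hmem : Φ v0 ∈ LinearMap.range Φ := ⟨v0, rfl⟩
        rw [hbot, Submodule.mem_bot] at hmem
        exact hv0 (Φzero v0 hmem)
      · intro w'
        have : w' ∈ LinearMap.range Φ := htop ▸ Submodule.mem_top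
        exact this
    exact ⟨LinearEquiv.ofBijective Φ ⟨Φinj, Φsurj⟩, fun g v => Φequiv g v⟩
  · rintro ⟨hmn, φ, hφ⟩
    obtain rfl : m = m' := by omega
    have hE : Function.Bijective (sumMap HO e (m + 1)) := hW.xbasis
    have hE' : Function.Bijective (sumMap HO e' (m + 1)) := hW'.xbasis
    let E : (Fin (m + 1) → V) ≃ₗ[k] W := LinearEquiv.ofBijective _ hE
    let E' : (Fin (m + 1) → V') ≃ₗ[k] W' := LinearEquiv.ofBijective _ hE'
    have hEsymm : ∀ u, E.symm (sumMap HO e (m + 1) u) = u := fun u =>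
      E.symm_apply_apply u
    let F : W ≃ₗ[k] W' :=
      E.symm.trans ((LinearEquiv.piCongrRight fun _ : Fin (m + 1) => φ).trans E')
    have hFL : ∀ u : Fin (m + 1) → V,
        F (sumMap HO e (m + 1) u) = sumMap HO e' (m + 1) (fun j => φ (u j)) := by
      intro u
      show E' ((LinearEquiv.piCongrRight fun _ : Fin (m + 1) => φ)
        (E.symm (sumMap HO e (m + 1) u))) = _
      rw [hEsymm]
      rfl
    have hFg : ∀ (g : G) (w : W), F (HO.emb (MonoidAlgebra.of k G g) • w)
        = HO.emb (MonoidAlgebra.of k G g) • F w := by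
      intro g w
      obtain ⟨u, rfl⟩ := hE.surjective w
      rw [g_smul_sumMap HO hW, hFL, hFL, g_smul_sumMap HO hW']
      congr 1
      funext j
      simp [hφ]
    have hFx : ∀ w : W, F (HO.x • w) = HO.x • F w := by
      intro w
      obtain ⟨u, rfl⟩ := hE.surjective w
      rw [x_smul_sumMap HO hW, hFL, hFL, x_smul_sumMap HO hW']
      congr 1
      funext j
      induction j using Fin.cases with
      | zero => simp [shiftFun]
      | succ i => simp [shiftFun]
    have hFxi : ∀ (i : ℕ) (w : W), F (HO.x ^ i • w) = HO.x ^ i • F w := by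
      intro i
      induction i with
      | zero => intro w; simp
      | succ i ih =>
        intro w
        rw [pow_succ', mul_smul, mul_smul, hFx, ih]
    have hFh : ∀ (h : H) (w : W), F (h • w) = h • F w := by
      intro h w
      have hmem : h ∈ Submodule.span k
          (Set.range fun p : G × ℕ =>
            HO.emb (MonoidAlgebra.of k G p.1) * HO.x ^ p.2) := by
        rw [HO.basis_span]; trivial
      induction hmem using Submodule.span_induction with
      | mem z hz =>
        obtain ⟨⟨g, i⟩, rfl⟩ := hz
        rw [mul_smul, mul_smul, hFg, hFxi]
      | zero => rw [zero_smul, zero_smul, map_zero]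
      | add y z _ _ ihy ihz => rw [add_smul, add_smul, map_add, ihy, ihz]
      | smul c z _ ih => rw [smul_assoc, smul_assoc, map_smul, ih]
    exact ⟨{ toFun := F
             map_add' := F.map_add
             map_smul' := hFh
             invFun := F.symm
             left_inv := F.left_inv
             right_inv := F.right_inv }⟩

end HopfOrePaper
end
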